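/- arXiv:2310.14012 — 12 statements merged into one kernel-verified Lean document; each statement's English description precedes it below -/
import Mathlib

section
/- Let G be a 4×4 complex Hermitian positive semidefinite matrix indexed by (Fin 2) × (Fin 2) (the first index labeling two spatial points, the second labeling two polarization components). Suppose there exists a nonzero vector P ∈ ℂ² (a polarization projection) such that the projected 2×2 spatial coherence matrix M, defined by M k l = ∑_{i,j} conj(P i) * G (k,i) (l,j) * P j, has rank at most 1 (i.e., the projected field is spatially fully coherent). Then the rank of G is at most 3. -/
open Matrix Kronecker ComplexOrder

/-- The projected 2×2 spatial coherence matrix obtained from a coherence matrix `G`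
(indexed by spatial point × polarization) by a polarization projection `P`:
`M k l = ∑ i j, conj (P i) * G (k,i) (l,j) * P j`. -/
noncomputable def projMat (G : Matrix (Fin 2 × Fin 2) (Fin 2 × Fin 2) ℂ) (P : Fin 2 → ℂ) :
    Matrix (Fin 2) (Fin 2) ℂ :=
  Matrix.of fun k l => ∑ i, ∑ j, (starRingEnd ℂ) (P i) * G (k, i) (l, j) * P j

/-- If a Hermitian positive semidefinite 4×4 coherence matrix admits a nonzero polarization
projection along which the projected spatial coherence matrix has rank at most 1
(spatial full coherence), then the rank of `G` is at most 3. -/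
theorem rank_le_three_of_projection_coherent
    (G : Matrix (Fin 2 × Fin 2) (Fin 2 × Fin 2) ℂ) (hG : G.PosSemidef)
    (P : Fin 2 → ℂ) (hP : P ≠ 0)
    (hcoh : (projMat G P).rank ≤ 1) :
    G.rank ≤ 3 := by
  set M := projMat G P with hM
  -- M has a nonzero kernel vector
  have hker : ∃ v : Fin 2 → ℂ, v ≠ 0 ∧ M *ᵥ v = 0 := by
    have h1 : M.rank + Module.finrank ℂ (LinearMap.ker M.mulVecLin) = 2 := by
      have := LinearMap.finrank_range_add_finrank_ker M.mulVecLin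
      simpa [Matrix.rank] using this
    have h2 : LinearMap.ker M.mulVecLin ≠ ⊥ := by
      intro h
      rw [h] at h1
      simp at h1
      omega
    obtain ⟨v, hv, hv0⟩ := Submodule.exists_mem_ne_zero_of_ne_bot h2
    exact ⟨v, hv0, hv⟩
  obtain ⟨v, hv0, hvker⟩ := hker
  -- the lifted vector
  set w : Fin 2 × Fin 2 → ℂ := fun p => v p.1 * P p.2 with hw
  have hw0 : w ≠ 0 := by
    obtain ⟨k, hk⟩ := Function.ne_iff.mp hv0
    obtain ⟨i, hi⟩ := Function.ne_iff.mp hP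
    intro h
    have := congrFun h (k, i)
    simp [hw] at this
    tauto
  have hquad : star w ⬝ᵥ G *ᵥ w = star v ⬝ᵥ M *ᵥ v := by
    simp only [dotProduct, mulVec, Pi.star_apply, hw, hM, projMat, Matrix.of_apply,
      Fintype.sum_prod_type, Finset.mul_sum, Finset.sum_mul]
    apply Finset.sum_congr rfl
    intro k _
    rw [Finset.sum_comm]
    apply Finset.sum_congr rfl
    intro l _
    apply Finset.sum_congr rfl
    intro i _
    apply Finset.sum_congr rfl
    intro j _
    simp only [star_mul', RCLike.star_def]
    ring
  have hGw : G *ᵥ w = 0 := by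
    rw [← hG.dotProduct_mulVec_zero_iff, hquad, hvker, dotProduct_zero]
  -- kernel of G nontrivial ⇒ rank ≤ 3
  have hkG : LinearMap.ker G.mulVecLin ≠ ⊥ := by
    intro h
    have : w = 0 := by
      have hmem : w ∈ LinearMap.ker G.mulVecLin := by
        simp [LinearMap.mem_ker, Matrix.mulVecLin_apply, hGw]
      rw [h] at hmem
      simpa using hmem
    exact hw0 this
  have h1 : G.rank + Module.finrank ℂ (LinearMap.ker G.mulVecLin) = 4 := by
    have := LinearMap.finrank_range_add_finrank_ker G.mulVecLin
    simpa [Matrix.rank] using this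
  have h2 : 1 ≤ Module.finrank ℂ (LinearMap.ker G.mulVecLin) := by
    rw [Nat.one_le_iff_ne_zero]
    intro h
    exact hkG (Submodule.finrank_eq_zero.mp h)
  omega
end

section
/- Let G be a 4×4 complex Hermitian positive semidefinite matrix indexed by (Fin 2) × (Fin 2) (spatial point index first, polarization index second). Suppose there exist two nonzero vectors P, Q ∈ ℂ² with ⟨P, Q⟩ = 0 (orthogonal polarization projections) such that both projected 2×2 spatial coherence matrices M_P and M_Q, where M_P k l = ∑_{i,j} conj(P i) * G (k,i) (l,j) * P j and similarly for Q, have rank at most 1. Then the rank of G is at most 2. -/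
open Matrix Kronecker ComplexOrder

noncomputable def liftCol (P : Fin 2 → ℂ) : Matrix (Fin 2 × Fin 2) (Fin 2) ℂ :=
  Matrix.of fun p l => if p.1 = l then P p.2 else 0

lemma projMat_eq (G : Matrix (Fin 2 × Fin 2) (Fin 2 × Fin 2) ℂ) (P : Fin 2 → ℂ) :
    projMat G P = (liftCol P)ᴴ * G * (liftCol P) := by
  ext k l
  fin_cases k <;>
  simp [projMat, liftCol, Matrix.mul_apply, Fintype.sum_prod_type,
    Finset.mul_sum, Finset.sum_mul, mul_comm, mul_assoc, mul_left_comm] <;> ring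

lemma resolution (P Q : Fin 2 → ℂ) (horth : star P ⬝ᵥ Q = 0) :
    (star Q ⬝ᵥ Q) • (liftCol P * (liftCol P)ᴴ) + (star P ⬝ᵥ P) • (liftCol Q * (liftCol Q)ᴴ)
      = ((star P ⬝ᵥ P) * (star Q ⬝ᵥ Q)) • (1 : Matrix (Fin 2 × Fin 2) (Fin 2 × Fin 2) ℂ) := by
  have h1 : (starRingEnd ℂ) (P 0) * Q 0 + (starRingEnd ℂ) (P 1) * Q 1 = 0 := by
    simpa [dotProduct, Fin.sum_univ_two] using horth
  have h2 : P 0 * (starRingEnd ℂ) (Q 0) + P 1 * (starRingEnd ℂ) (Q 1) = 0 := by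
    have := congrArg (starRingEnd ℂ) h1
    simpa [mul_comm] using this
  ext ⟨k, i⟩ ⟨l, j⟩
  fin_cases k <;> fin_cases l <;> fin_cases i <;> fin_cases j <;>
    simp [liftCol, Matrix.mul_apply, dotProduct, Fin.sum_univ_two, Matrix.one_apply,
      Prod.ext_iff] <;>
    first
      | linear_combination (P 0 * (starRingEnd ℂ) (Q 0)) * h1 - ((starRingEnd ℂ) (P 1) * Q 1) * h2
      | linear_combination ((starRingEnd ℂ) (P 1) * Q 1) * h2 - (P 0 * (starRingEnd ℂ) (Q 0)) * h1
      | linear_combination (P 0 * (starRingEnd ℂ) (Q 1)) * h1 + ((starRingEnd ℂ) (P 1) * Q 0) * h2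
      | linear_combination ((starRingEnd ℂ) (P 0) * Q 1) * h2 + (P 1 * (starRingEnd ℂ) (Q 0)) * h1

lemma matrix_rank_add_le {m n : Type*} [Fintype n] [Fintype m] (A B : Matrix m n ℂ) :
    (A + B).rank ≤ A.rank + B.rank := by
  classical
  have h : LinearMap.range (A + B).mulVecLin ≤
      LinearMap.range A.mulVecLin ⊔ LinearMap.range B.mulVecLin := by
    rintro x ⟨v, rfl⟩
    rw [Matrix.mulVecLin_add]
    exact Submodule.mem_sup.mpr ⟨A.mulVecLin v, ⟨v, rfl⟩, B.mulVecLin v, ⟨v, rfl⟩, rfl⟩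
  exact (Submodule.finrank_mono h).trans
    (Submodule.finrank_add_le_finrank_add_finrank _ _)

lemma matrix_rank_smul_le {m n : Type*} [Fintype n] [Fintype m] [DecidableEq n]
    (c : ℂ) (A : Matrix n m ℂ) : (c • A).rank ≤ A.rank := by
  have : c • A = (c • (1 : Matrix n n ℂ)) * A := by rw [Matrix.smul_mul, Matrix.one_mul]
  rw [this]
  exact Matrix.rank_mul_le_right _ _

/-- If a Hermitian positive semidefinite 4×4 coherence matrix admits two nonzero, mutually
orthogonal polarization projections along each of which the projected spatial coherence matrix
has rank at most 1 (spatial full coherence), then the rank of `G` is at most 2. -/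
theorem rank_le_two_of_two_orthogonal_projections_coherent
    (G : Matrix (Fin 2 × Fin 2) (Fin 2 × Fin 2) ℂ) (hG : G.PosSemidef)
    (P Q : Fin 2 → ℂ) (hP : P ≠ 0) (hQ : Q ≠ 0)
    (horth : star P ⬝ᵥ Q = 0)
    (hcohP : (projMat G P).rank ≤ 1) (hcohQ : (projMat G Q).rank ≤ 1) :
    G.rank ≤ 2 := by
  obtain ⟨B, hB⟩ : ∃ B : Matrix (Fin 2 × Fin 2) (Fin 2 × Fin 2) ℂ, G = Bᴴ * B := by
    classical
    open scoped MatrixOrder in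
    obtain ⟨B, hB⟩ := CStarAlgebra.nonneg_iff_eq_star_mul_self.mp hG.nonneg
    exact ⟨B, hB⟩
  set Ap := liftCol P with hAp
  set Aq := liftCol Q with hAq
  have key : ∀ (R : Fin 2 → ℂ), (projMat G R).rank ≤ 1 → (G * liftCol R).rank ≤ 1 := by
    intro R hcoh
    have h1 : (G * liftCol R).rank ≤ (B * liftCol R).rank := by
      rw [hB, Matrix.mul_assoc]
      exact Matrix.rank_mul_le_right _ _
    have h2 : (B * liftCol R).rank = (projMat G R).rank := by
      rw [← Matrix.rank_conjTranspose_mul_self (B * liftCol R)]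
      congr 1
      rw [projMat_eq, hB, Matrix.conjTranspose_mul]
      simp [Matrix.mul_assoc]
    omega
  have hrP : (G * Ap).rank ≤ 1 := key P hcohP
  have hrQ : (G * Aq).rank ≤ 1 := key Q hcohQ
  set nP := star P ⬝ᵥ P with hnP
  set nQ := star Q ⬝ᵥ Q with hnQ
  have hnP0 : nP ≠ 0 := fun h => hP (dotProduct_star_self_eq_zero.mp h)
  have hnQ0 : nQ ≠ 0 := fun h => hQ (dotProduct_star_self_eq_zero.mp h)
  have hdecomp : G = (nP * nQ)⁻¹ • (nQ • (G * Ap * Apᴴ) + nP • (G * Aq * Aqᴴ)) := by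
    have hres := resolution P Q horth
    have : nQ • (G * Ap * Apᴴ) + nP • (G * Aq * Aqᴴ) = (nP * nQ) • G := by
      calc nQ • (G * Ap * Apᴴ) + nP • (G * Aq * Aqᴴ)
          = G * (nQ • (Ap * Apᴴ) + nP • (Aq * Aqᴴ)) := by
            rw [Matrix.mul_add, Matrix.mul_smul, Matrix.mul_smul, Matrix.mul_assoc,
              Matrix.mul_assoc]
        _ = G * ((nP * nQ) • (1 : Matrix (Fin 2 × Fin 2) (Fin 2 × Fin 2) ℂ)) := by rw [hres]
        _ = (nP * nQ) • G := by rw [Matrix.mul_smul, Matrix.mul_one]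
    rw [this, inv_smul_smul₀ (mul_ne_zero hnP0 hnQ0)]
  calc G.rank = ((nP * nQ)⁻¹ • (nQ • (G * Ap * Apᴴ) + nP • (G * Aq * Aqᴴ))).rank := by
        rw [← hdecomp]
    _ ≤ (nQ • (G * Ap * Apᴴ) + nP • (G * Aq * Aqᴴ)).rank := matrix_rank_smul_le _ _
    _ ≤ (nQ • (G * Ap * Apᴴ)).rank + (nP • (G * Aq * Aqᴴ)).rank := matrix_rank_add_le _ _
    _ ≤ (G * Ap).rank + (G * Aq).rank := by
        gcongr ?_ + ?_
        · have : nQ • (G * Ap * Apᴴ) = (G * Ap) * (nQ • Apᴴ) := by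
            rw [Matrix.mul_smul]
          rw [this]; exact Matrix.rank_mul_le_left _ _
        · have : nP • (G * Aq * Aqᴴ) = (G * Aq) * (nP • Aqᴴ) := by
            rw [Matrix.mul_smul]
          rw [this]; exact Matrix.rank_mul_le_left _ _
    _ ≤ 2 := by omega
end

section
/- Let G be a 4×4 complex Hermitian positive semidefinite matrix indexed by (Fin 2) × (Fin 2) with rank exactly 3. Then for every 4×4 unitary matrix U and for all 2×2 complex matrices A and B, U G Uᴴ ≠ A ⊗ B. That is, a rank-3 coherence matrix can never be rendered separable with respect to its two degrees of freedom by any global unitary transformation. -/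
open Matrix Kronecker ComplexOrder

/-- A 2×2 matrix with zero determinant factors through `Fin 1`. -/
lemma det_zero_factor (B : Matrix (Fin 2) (Fin 2) ℂ) (h : B.det = 0) :
    ∃ (C : Matrix (Fin 2) (Fin 1) ℂ) (D : Matrix (Fin 1) (Fin 2) ℂ), B = C * D := by
  rw [Matrix.det_fin_two] at h
  by_cases ha : B 0 0 ≠ 0
  · refine ⟨Matrix.of ![![B 0 0], ![B 1 0]], Matrix.of ![![1, B 0 1 / B 0 0]], ?_⟩
    ext i j
    fin_cases i <;> fin_cases j <;>
      simp [Matrix.mul_apply, Fin.sum_univ_succ] <;>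
      field_simp <;> linear_combination h
  · push_neg at ha
    by_cases hb : B 0 1 = 0
    · refine ⟨Matrix.of ![![0], ![1]], Matrix.of ![![B 1 0, B 1 1]], ?_⟩
      ext i j
      fin_cases i <;> fin_cases j <;> simp [Matrix.mul_apply, Fin.sum_univ_succ, ha, hb]
    · have hc : B 1 0 = 0 := by
        rw [ha] at h; field_simp at h
        rcases mul_eq_zero.mp (by linear_combination -h : B 0 1 * B 1 0 = 0) with h' | h'
        · exact absurd h' hb
        · exact h'
      refine ⟨Matrix.of ![![B 0 1], ![B 1 1]], Matrix.of ![![0, 1]], ?_⟩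
      ext i j
      fin_cases i <;> fin_cases j <;> simp [Matrix.mul_apply, Fin.sum_univ_succ, ha, hc]

lemma rank_kron_ne_three (A B : Matrix (Fin 2) (Fin 2) ℂ) :
    (A ⊗ₖ B).rank ≠ 3 := by
  intro h3
  have hdet : (A ⊗ₖ B).det = 0 := by
    by_contra hd
    have : (A ⊗ₖ B).rank = 4 := by
      have := Matrix.rank_of_isUnit (A ⊗ₖ B) ((Matrix.isUnit_iff_isUnit_det _).mpr (Ne.isUnit hd))
      simpa using this
    omega
  rw [Matrix.det_kronecker] at hdet
  have : A.det = 0 ∨ B.det = 0 := by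
    rcases mul_eq_zero.mp hdet with h | h
    · exact Or.inl (pow_eq_zero_iff (by norm_num) |>.mp h)
    · exact Or.inr (pow_eq_zero_iff (by norm_num) |>.mp h)
  rcases this with h | h
  · obtain ⟨C, D, rfl⟩ := det_zero_factor A h
    have hfac : (C * D) ⊗ₖ B = (C ⊗ₖ B) * (D ⊗ₖ (1 : Matrix (Fin 2) (Fin 2) ℂ)) := by
      rw [← Matrix.mul_kronecker_mul, Matrix.mul_one]
    have hle : ((C * D) ⊗ₖ B).rank ≤ 2 := by
      rw [hfac]
      calc ((C ⊗ₖ B) * (D ⊗ₖ (1 : Matrix (Fin 2) (Fin 2) ℂ))).rank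
          ≤ (C ⊗ₖ B).rank := Matrix.rank_mul_le_left _ _
        _ ≤ Fintype.card (Fin 1 × Fin 2) := Matrix.rank_le_card_width _
        _ = 2 := by simp
    omega
  · obtain ⟨C, D, rfl⟩ := det_zero_factor B h
    have hfac : A ⊗ₖ (C * D) = (A ⊗ₖ C) * ((1 : Matrix (Fin 2) (Fin 2) ℂ) ⊗ₖ D) := by
      rw [← Matrix.mul_kronecker_mul, Matrix.mul_one]
    have hle : (A ⊗ₖ (C * D)).rank ≤ 2 := by
      rw [hfac]
      calc ((A ⊗ₖ C) * ((1 : Matrix (Fin 2) (Fin 2) ℂ) ⊗ₖ D)).rank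
          ≤ (A ⊗ₖ C).rank := Matrix.rank_mul_le_left _ _
        _ ≤ Fintype.card (Fin 2 × Fin 1) := Matrix.rank_le_card_width _
        _ = 2 := by simp
    omega

/-- A rank-3 Hermitian positive semidefinite 4×4 coherence matrix can never be rendered
separable (equal to a Kronecker product of 2×2 matrices) by any global unitary. -/
theorem rank_three_not_unitarily_separable
    (G : Matrix (Fin 2 × Fin 2) (Fin 2 × Fin 2) ℂ) (hG : G.PosSemidef)
    (hrank : G.rank = 3) :
    ∀ U : Matrix (Fin 2 × Fin 2) (Fin 2 × Fin 2) ℂ, U * Uᴴ = 1 →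
      ∀ A B : Matrix (Fin 2) (Fin 2) ℂ, U * G * Uᴴ ≠ A ⊗ₖ B := by
  intro U hU A B heq
  have hdetU : IsUnit U.det := by
    have : U.det * Uᴴ.det = 1 := by rw [← Matrix.det_mul, hU, Matrix.det_one]
    exact IsUnit.of_mul_eq_one _ this
  have hdetUH : IsUnit Uᴴ.det := by
    have : Uᴴ.det * U.det = 1 := by
      rw [mul_comm, ← Matrix.det_mul, hU, Matrix.det_one]
    exact IsUnit.of_mul_eq_one _ this
  have hr : (U * G * Uᴴ).rank = G.rank := by
    rw [Matrix.rank_mul_eq_left_of_isUnit_det _ _ hdetUH,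
      Matrix.rank_mul_eq_right_of_isUnit_det _ _ hdetU]
  exact rank_kron_ne_three A B (heq ▸ hr ▸ hrank ▸ rfl)
end

section
/- Let G be a 4×4 complex Hermitian positive semidefinite matrix indexed by (Fin 2) × (Fin 2) with trace 1 and rank at most 2, and let λ₁ ≥ λ₂ ≥ 0 be its two largest eigenvalues (so λ₁ + λ₂ = 1). Then there exists a 4×4 unitary matrix U such that U G Uᴴ = (diagonal matrix with entries 1, 0) ⊗ (diagonal matrix with entries λ₁, λ₂), the Kronecker product of a rank-one 2×2 projector and a 2×2 diagonal positive semidefinite trace-1 matrix. In particular, every rank-2 coherence matrix can be rendered separable by a global unitary. -/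
open Matrix Kronecker ComplexOrder

lemma exists_comp_perm_eq {α : Type*} [Fintype α] [DecidableEq α] {β : Type*} [LinearOrder β]
    (f g : α → β) (h : Finset.univ.val.map f = Finset.univ.val.map g) :
    ∃ σ : Equiv.Perm α, f ∘ σ = g := by
  obtain ⟨n, ⟨e⟩⟩ := Finite.exists_equiv_fin α
  have huniv : ∀ (ε : Fin n ≃ α), (Finset.univ.val.map ε : Multiset α) = Finset.univ.val := by
    intro ε
    have := congrArg Finset.val (Finset.map_univ_equiv ε)
    simpa [Finset.map_val] using this
  have hmap : ∀ (p : α → β) (ε : Fin n ≃ α),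
      (Finset.univ.val.map (p ∘ ε) : Multiset β) = Finset.univ.val.map p := by
    intro p ε
    rw [← Multiset.map_map, huniv]
  set f' : Fin n → β := f ∘ e.symm with hf'
  set g' : Fin n → β := g ∘ e.symm with hg'
  have hchain : (Finset.univ.val.map (f' ∘ Tuple.sort f') : Multiset β)
      = Finset.univ.val.map (g' ∘ Tuple.sort g') := by
    rw [show f' ∘ (Tuple.sort f') = f ∘ ((Tuple.sort f').trans e.symm) from rfl,
        show g' ∘ (Tuple.sort g') = g ∘ ((Tuple.sort g').trans e.symm) from rfl,
        hmap f, hmap g, h]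
  have key : f' ∘ Tuple.sort f' = g' ∘ Tuple.sort g' := by
    apply List.ofFn_injective
    have hperm : (List.ofFn (f' ∘ Tuple.sort f')).Perm (List.ofFn (g' ∘ Tuple.sort g')) := by
      rw [← Multiset.coe_eq_coe, ← Fin.univ_val_map, ← Fin.univ_val_map]
      exact hchain
    exact List.Perm.eq_of_sortedLE
      (List.sortedLE_ofFn_iff.2 (Tuple.monotone_sort f'))
      (List.sortedLE_ofFn_iff.2 (Tuple.monotone_sort g')) hperm
  refine ⟨e.trans (((Tuple.sort g').symm.trans (Tuple.sort f')).trans e.symm), ?_⟩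
  funext a
  have := congrFun key ((Tuple.sort g').symm (e a))
  simp only [Function.comp_apply, Equiv.apply_symm_apply] at this ⊢
  simpa [f', g'] using this

/-- Every rank-≤2, trace-1, Hermitian positive semidefinite 4×4 coherence matrix with
(largest) eigenvalues `l1 ≥ l2 ≥ 0` (the remaining eigenvalues vanishing) can be brought by a
global unitary to the separable form `diag{1,0} ⊗ diag{l1,l2}`. -/
theorem rank_two_unitarily_separable
    (G : Matrix (Fin 2 × Fin 2) (Fin 2 × Fin 2) ℂ) (hG : G.PosSemidef)
    (htr : G.trace = 1) (hrank : G.rank ≤ 2)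
    (l1 l2 : ℝ) (h21 : l2 ≤ l1) (h2 : 0 ≤ l2) (hsum : l1 + l2 = 1)
    (heig : Finset.univ.val.map hG.isHermitian.eigenvalues = ({l1, l2, 0, 0} : Multiset ℝ)) :
    ∃ U : Matrix (Fin 2 × Fin 2) (Fin 2 × Fin 2) ℂ, U * Uᴴ = 1 ∧
      U * G * Uᴴ =
        Matrix.diagonal ![(1 : ℂ), 0] ⊗ₖ Matrix.diagonal ![(l1 : ℂ), (l2 : ℂ)] := by
  classical
  set hH := hG.isHermitian
  -- target eigenvalue arrangement
  set t : Fin 2 × Fin 2 → ℝ := fun p => if p.1 = 0 then (if p.2 = 0 then l1 else l2) else 0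
    with ht_def
  have huniv4 : (Finset.univ : Finset (Fin 2 × Fin 2)).val
      = {((0:Fin 2),(0:Fin 2)), (0,1), (1,0), (1,1)} := by decide
  have ht : Finset.univ.val.map t = ({l1, l2, 0, 0} : Multiset ℝ) := by
    rw [huniv4]
    simp [ht_def]
  obtain ⟨σ, hσ⟩ := exists_comp_perm_eq hH.eigenvalues t (heig.trans ht.symm)
  -- permutation matrix
  set P : Matrix (Fin 2 × Fin 2) (Fin 2 × Fin 2) ℂ :=
    Matrix.of fun i j => if j = σ i then 1 else 0 with hP_def
  have hPP : P * Pᴴ = 1 := by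
    ext i j
    simp [hP_def, Matrix.mul_apply, Matrix.one_apply, Matrix.conjTranspose_apply,
      apply_ite, Finset.sum_ite_eq', EmbeddingLike.apply_eq_iff_eq, eq_comm]
  have hPD : ∀ d : (Fin 2 × Fin 2) → ℂ, P * Matrix.diagonal d * Pᴴ
      = Matrix.diagonal (d ∘ σ) := by
    intro d
    ext i j
    rcases eq_or_ne i j with h | h
    · subst h
      simp [hP_def, Matrix.mul_apply, Matrix.diagonal_apply, Matrix.conjTranspose_apply,
        apply_ite, Finset.sum_ite_eq', EmbeddingLike.apply_eq_iff_eq]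
    · simp only [hP_def, Matrix.mul_apply, Matrix.diagonal_apply, Matrix.conjTranspose_apply,
        Matrix.of_apply, apply_ite, Finset.sum_ite_eq',star_one, star_zero,
        Finset.mem_univ, if_true, mul_ite, mul_one, mul_zero, ite_mul, one_mul, zero_mul,
        EmbeddingLike.apply_eq_iff_eq, Function.comp_apply]
      rw [if_neg h, if_neg (show ¬ j = i from fun hji => h hji.symm)]
  set V : Matrix (Fin 2 × Fin 2) (Fin 2 × Fin 2) ℂ :=
    (hH.eigenvectorUnitary : Matrix (Fin 2 × Fin 2) (Fin 2 × Fin 2) ℂ) with hV_def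
  have hVmem := (hH.eigenvectorUnitary).2
  have hVV : Vᴴ * V = 1 := by
    simpa [Matrix.star_eq_conjTranspose] using (Matrix.mem_unitaryGroup_iff'.mp hVmem)
  have hdiag : Vᴴ * G * V = Matrix.diagonal (RCLike.ofReal ∘ hH.eigenvalues) := by
    have h := hH.conjStarAlgAut_star_eigenvectorUnitary
    rw [Unitary.conjStarAlgAut_star_apply] at h
    simpa [Matrix.star_eq_conjTranspose] using h
  refine ⟨P * Vᴴ, ?_, ?_⟩
  · rw [Matrix.conjTranspose_mul, Matrix.conjTranspose_conjTranspose, ← Matrix.mul_assoc,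
      Matrix.mul_assoc P, hVV, Matrix.mul_one, hPP]
  · have hcollect : P * Vᴴ * G * (P * Vᴴ)ᴴ = P * (Vᴴ * G * V) * Pᴴ := by
      simp only [Matrix.conjTranspose_mul, Matrix.conjTranspose_conjTranspose, Matrix.mul_assoc]
    have hfun : (RCLike.ofReal ∘ hH.eigenvalues) ∘ ⇑σ
        = fun mn : Fin 2 × Fin 2 => ![(1:ℂ), 0] mn.1 * ![(l1:ℂ), (l2:ℂ)] mn.2 := by
      funext p
      have hp := congrFun hσ p
      simp only [Function.comp_apply] at hp ⊢
      rw [hp]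
      fin_cases p <;> simp [ht_def]
    rw [hcollect, hdiag, hPD, Matrix.diagonal_kronecker_diagonal, hfun]
end

section
/- Let G be a 4×4 complex Hermitian positive semidefinite matrix indexed by (Fin 2) × (Fin 2) with trace 1 and rank at most 1. Then there exists a 4×4 unitary matrix U such that U G Uᴴ = E ⊗ E, where E is the 2×2 matrix with a single 1 in the (0,0) entry and zeros elsewhere. In particular, every fully coherent (rank-1) field can be rendered separable by a global unitary, with both degrees of freedom fully coherent. -/
open Matrix Kronecker ComplexOrder

/-- Every rank-≤1, trace-1, Hermitian positive semidefinite 4×4 coherence matrix (a fully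
coherent field) can be brought by a global unitary to the separable form `E ⊗ E`, where `E`
is the 2×2 matrix with a single 1 in the (0,0) entry; both degrees of freedom are then fully
coherent. -/
theorem rank_one_unitarily_separable
    (G : Matrix (Fin 2 × Fin 2) (Fin 2 × Fin 2) ℂ) (hG : G.PosSemidef)
    (htr : G.trace = 1) (hrank : G.rank ≤ 1) :
    ∃ U : Matrix (Fin 2 × Fin 2) (Fin 2 × Fin 2) ℂ, U * Uᴴ = 1 ∧
      U * G * Uᴴ =
        Matrix.single (0 : Fin 2) (0 : Fin 2) (1 : ℂ) ⊗ₖ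
          Matrix.single (0 : Fin 2) (0 : Fin 2) (1 : ℂ) := by
  have hH := hG.1
  set d : Fin 2 × Fin 2 → ℝ := hH.eigenvalues with hd
  set V := (hH.eigenvectorUnitary : Matrix (Fin 2 × Fin 2) (Fin 2 × Fin 2) ℂ) with hV
  have hVV : V * Vᴴ = 1 := (Matrix.mem_unitaryGroup_iff).mp hH.eigenvectorUnitary.2
  have hVV' : Vᴴ * V = 1 := (Matrix.mem_unitaryGroup_iff').mp hH.eigenvectorUnitary.2
  have hspec : G = V * diagonal (RCLike.ofReal ∘ d) * Vᴴ := hH.spectral_theorem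
  have htr' : ∑ i, (d i : ℂ) = 1 := by
    have : G.trace = (diagonal (RCLike.ofReal ∘ d)).trace := by
      rw [hspec, Matrix.trace_mul_cycle]
      rw [show Vᴴ * V = 1 from hVV', Matrix.one_mul]
    rw [this, Matrix.trace_diagonal] at htr
    simpa using htr
  have hsum : ∑ i, d i = 1 := by
    have := congrArg Complex.re htr'
    simpa using this
  have hcard : Fintype.card {i // d i ≠ 0} ≤ 1 := by
    rw [← hH.rank_eq_card_non_zero_eigs]; exact hrank
  obtain ⟨i, hi⟩ : ∃ i, d i ≠ 0 := by
    by_contra h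
    push_neg at h
    simp [h] at hsum
  have huniq : ∀ j, j ≠ i → d j = 0 := by
    intro j hj
    by_contra hjne
    have : 2 ≤ Fintype.card {k // d k ≠ 0} := by
      have : ({⟨i, hi⟩, ⟨j, hjne⟩} : Finset {k // d k ≠ 0}).card ≤ Fintype.card {k // d k ≠ 0} :=
        Finset.card_le_univ _
      rwa [Finset.card_insert_of_notMem (by simp [Subtype.ext_iff, hj.symm]),
        Finset.card_singleton] at this
    omega
  have hdi : d i = 1 := by
    rw [← hsum, Finset.sum_eq_single i (fun j _ hj => huniq j hj) (by simp)]
  have hdval : ∀ j, d j = if j = i then 1 else 0 := by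
    intro j
    by_cases h : j = i
    · simp [h, hdi]
    · simp [h, huniq j h]
  set σ : (Fin 2 × Fin 2) ≃ (Fin 2 × Fin 2) := Equiv.swap ((0 : Fin 2), (0 : Fin 2)) i with hσ
  set P : Matrix (Fin 2 × Fin 2) (Fin 2 × Fin 2) ℂ := σ.toPEquiv.toMatrix with hP
  have hPherm : Pᴴ = P := by
    ext a b
    simp only [conjTranspose_apply, hP, PEquiv.toMatrix_apply, Equiv.toPEquiv_apply,
      Option.mem_def, Option.some.injEq]
    by_cases h : σ b = a
    · have h' : σ a = b := by rw [← h, hσ, Equiv.swap_apply_self]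
      simp [h, h']
    · have h' : σ a ≠ b := fun hc => h (by rw [← hc, hσ, Equiv.swap_apply_self])
      simp [h, h']
  have hPP : P * P = 1 := by
    rw [hP, PEquiv.toMatrix_toPEquiv_mul]
    ext a b
    simp [Matrix.submatrix_apply, PEquiv.toMatrix_apply, Equiv.toPEquiv_apply, hσ,
      Equiv.swap_apply_self, Matrix.one_apply, eq_comm]
  refine ⟨P * Vᴴ, ?_, ?_⟩
  · rw [Matrix.conjTranspose_mul, Matrix.conjTranspose_conjTranspose, hPherm, ← Matrix.mul_assoc,
      Matrix.mul_assoc P, hVV', Matrix.mul_one, hPP]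
  · rw [Matrix.conjTranspose_mul, Matrix.conjTranspose_conjTranspose, hPherm]
    have hmid : Vᴴ * G * V = diagonal (RCLike.ofReal ∘ d) := by
      rw [hspec, ← Matrix.mul_assoc, ← Matrix.mul_assoc, hVV', Matrix.one_mul, Matrix.mul_assoc,
        hVV', Matrix.mul_one]
    have hassoc : P * Vᴴ * G * (V * P) = P * (Vᴴ * G * V) * P := by
      simp only [Matrix.mul_assoc]
    rw [hassoc, hmid, hP, PEquiv.toMatrix_toPEquiv_mul, PEquiv.mul_toMatrix_toPEquiv,
      Matrix.submatrix_submatrix, Function.comp_id, Function.id_comp,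
      show σ.symm = σ from by rw [hσ, Equiv.symm_swap],
      Matrix.submatrix_diagonal_equiv]
    have hcomp : ((RCLike.ofReal ∘ d) ∘ σ) =
        fun j => if j = ((0 : Fin 2), (0 : Fin 2)) then (1 : ℂ) else 0 := by
      funext j
      simp only [Function.comp_apply, hdval]
      by_cases h : j = ((0 : Fin 2), (0 : Fin 2))
      · simp [h, hσ, Equiv.swap_apply_left]
      · have hne : σ j ≠ i := by
          intro hc
          apply h
          rw [← σ.symm_apply_apply j, hc, hσ, Equiv.symm_swap, Equiv.swap_apply_right]
        rw [if_neg hne, if_neg h]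
        simp
    rw [hcomp]
    ext ⟨k, l⟩ ⟨m, n⟩
    fin_cases k <;> fin_cases l <;> fin_cases m <;> fin_cases n <;>
      simp [Matrix.diagonal_apply, Matrix.single, Prod.ext_iff]
end

section
/- Let G be a 4×4 complex Hermitian positive semidefinite matrix indexed by (Fin 2) × (Fin 2) with trace 1, and let λ₁ ≥ λ₂ ≥ λ₃ ≥ λ₄ ≥ 0 be its eigenvalues listed in decreasing order. Then there exist a 4×4 unitary matrix U and 2×2 Hermitian positive semidefinite trace-1 matrices A and B with U G Uᴴ = A ⊗ B if and only if λ₁ λ₄ = λ₂ λ₃. -/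
open Matrix Kronecker ComplexOrder Polynomial

section Helpers

variable {n : Type*} [Fintype n] [DecidableEq n]

private lemma USep.ms_perm {l₁ l₂ : List ℝ} (h : l₁.Perm l₂) : (↑l₁ : Multiset ℝ) = ↑l₂ :=
  Quot.sound h

private lemma USep.ms_rev (a b c d : ℝ) : ({a,b,c,d} : Multiset ℝ) = {d,c,b,a} :=
  USep.ms_perm (by simpa using (List.reverse_perm [a,b,c,d]).symm)

private lemma USep.ms_swap2 (a b c d : ℝ) : ({a,b,c,d} : Multiset ℝ) = {b,a,d,c} :=
  USep.ms_perm ((List.Perm.swap b a _).trans (.cons b (.cons a (.swap d c _))))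

private lemma USep.ms_block (a b c d : ℝ) : ({a,b,c,d} : Multiset ℝ) = {c,d,a,b} :=
  USep.ms_perm (List.perm_append_comm (l₁ := [a,b]) (l₂ := [c,d]))

private lemma USep.quad_aux {l1 l2 l3 l4 p q r s : ℝ}
    (h21 : l2 ≤ l1) (h32 : l3 ≤ l2) (h43 : l4 ≤ l3)
    (hqp : q ≤ p) (hrq : r ≤ q) (hsr : s ≤ r)
    (hm : ({l1,l2,l3,l4} : Multiset ℝ) = {p,q,r,s}) :
    l1 = p ∧ l2 = q ∧ l3 = r ∧ l4 = s := by
  haveI : IsAntisymm ℝ (fun a b : ℝ => b ≤ a) := ⟨fun _ _ h1 h2 => le_antisymm h2 h1⟩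
  have hp : List.Perm [l1,l2,l3,l4] [p,q,r,s] := Multiset.coe_eq_coe.mp hm
  have h := List.Perm.eq_of_pairwise (le := fun a b : ℝ => b ≤ a)
    (fun _ _ _ _ h1 h2 => le_antisymm h2 h1)
    (by simp [List.pairwise_cons]; and_intros <;> linarith)
    (by simp [List.pairwise_cons]; and_intros <;> linarith) hp
  simp only [List.cons.injEq] at h
  exact ⟨h.1, h.2.1, h.2.2.1, h.2.2.2.1⟩

/-- core combinatorial lemma for the forward direction -/
private lemma USep.core {l1 l2 l3 l4 x y u w : ℝ}
    (h21 : l2 ≤ l1) (h32 : l3 ≤ l2) (h43 : l4 ≤ l3)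
    (hy : 0 ≤ y) (hyx : y ≤ x) (hw : 0 ≤ w) (hwu : w ≤ u)
    (hm : ({l1,l2,l3,l4} : Multiset ℝ) = {x*u, x*w, y*u, y*w}) :
    l1 * l4 = l2 * l3 := by
  rcases le_total (y*u) (x*w) with h | h
  · obtain ⟨e1, e2, e3, e4⟩ := USep.quad_aux h21 h32 h43
      (by nlinarith) h (by nlinarith) hm
    rw [e1, e2, e3, e4]; ring
  · have hm' : ({l1,l2,l3,l4} : Multiset ℝ) = {x*u, y*u, x*w, y*w} := by
      rw [hm]
      exact USep.ms_perm (.cons _ (List.Perm.swap _ _ _))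
    obtain ⟨e1, e2, e3, e4⟩ := USep.quad_aux h21 h32 h43
      (by nlinarith) h (by nlinarith) hm'
    rw [e1, e2, e3, e4]; ring

private lemma USep.charpoly_conj {W M : Matrix n n ℂ} (hW : W * Wᴴ = 1) :
    (W * M * Wᴴ).charpoly = M.charpoly := by
  have hmap : (W.map C) * (Wᴴ.map C) = 1 := by
    rw [← Matrix.map_mul, hW]; simp
  have key : charmatrix (W * M * Wᴴ) = W.map C * charmatrix M * Wᴴ.map C := by
    unfold charmatrix
    rw [Matrix.mul_sub, Matrix.sub_mul]
    congr 1
    · rw [Matrix.scalar_apply, ← Matrix.smul_one_eq_diagonal, mul_smul_comm, mul_one,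
        Matrix.smul_mul, hmap]
    · rw [RingHom.mapMatrix_apply, RingHom.mapMatrix_apply, ← Matrix.map_mul, ← Matrix.map_mul]
  have h2 : (W.map C).det * (Wᴴ.map C).det = 1 := by
    rw [← det_mul, hmap, det_one]
  rw [Matrix.charpoly, Matrix.charpoly, key, det_mul, det_mul]
  linear_combination (M.charmatrix.det : ℂ[X]) * h2

private lemma USep.charpoly_diag (f : n → ℂ) :
    (Matrix.diagonal f).charpoly = ∏ i, (X - C (f i)) := by
  have h : charmatrix (Matrix.diagonal f) = Matrix.diagonal (fun i => X - C (f i)) := by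
    apply Matrix.ext
    intro i j
    by_cases h : i = j
    · subst h; simp [charmatrix_apply_eq]
    · rw [charmatrix_apply_ne _ _ _ h, Matrix.diagonal_apply_ne _ h, Matrix.diagonal_apply_ne _ h,
        map_zero, neg_zero]
  rw [Matrix.charpoly, h, det_diagonal]

/-- eigenvalue multiset of a Hermitian matrix equals the diagonal of any unitary
diagonalization -/
private lemma USep.eig_multiset {M : Matrix n n ℂ} (hM : M.IsHermitian) {W : Matrix n n ℂ}
    (hW : W * Wᴴ = 1) {d : n → ℝ}
    (hMd : M = W * Matrix.diagonal (fun i => (d i : ℂ)) * Wᴴ) :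
    Finset.univ.val.map hM.eigenvalues = Finset.univ.val.map d := by
  have hroots : ∀ c : n → ℝ, (∏ i, (X - C ((c i : ℂ)))).roots
      = Finset.univ.val.map (fun i => ((c i : ℂ))) := by
    intro c
    rw [Finset.prod, show (fun i => X - C ((c i : ℂ)))
        = ((fun a : ℂ => X - C a) ∘ fun i => ((c i : ℂ))) from rfl,
      ← Multiset.map_map, roots_multiset_prod_X_sub_C]
  have hV : (hM.eigenvectorUnitary : Matrix n n ℂ)
      * (hM.eigenvectorUnitary : Matrix n n ℂ)ᴴ = 1 := by
    rw [← Matrix.star_eq_conjTranspose]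
    exact Matrix.mem_unitaryGroup_iff.mp hM.eigenvectorUnitary.2
  have h1 : M.charpoly = ∏ i, (X - C ((hM.eigenvalues i : ℂ))) := by
    conv_lhs => rw [hM.spectral_theorem]
    rw [Unitary.conjStarAlgAut_apply, Matrix.star_eq_conjTranspose, USep.charpoly_conj hV]
    exact USep.charpoly_diag _
  have h2 : M.charpoly = ∏ i, (X - C ((d i : ℂ))) := by
    rw [hMd, USep.charpoly_conj hW]
    exact USep.charpoly_diag _
  have h3 : Finset.univ.val.map (fun i => ((hM.eigenvalues i : ℂ)))
      = Finset.univ.val.map (fun i => ((d i : ℂ))) := by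
    rw [← hroots, ← hroots, ← h1, ← h2]
  apply Multiset.map_injective Complex.ofReal_injective
  simpa [Multiset.map_map, Function.comp] using h3

private lemma USep.kron_conjT (A B : Matrix (Fin 2) (Fin 2) ℂ) : (A ⊗ₖ B)ᴴ = Aᴴ ⊗ₖ Bᴴ := by
  apply Matrix.ext
  rintro ⟨i, j⟩ ⟨k, l⟩
  simp [Matrix.conjTranspose_apply, Matrix.kroneckerMap_apply, mul_comm]

private def USep.c4 : Fin 4 ≃ Fin 2 × Fin 2 where
  toFun := ![(0,0),(0,1),(1,0),(1,1)]
  invFun := fun p => ⟨2 * p.1.val + p.2.val, by omega⟩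
  left_inv := by decide
  right_inv := by decide

private lemma USep.ms_equiv {m : Type*} [Fintype m] (e : m ≃ n) (f : n → ℝ) :
    Finset.univ.val.map (f ∘ e) = Finset.univ.val.map f := by
  have h : Finset.univ.val.map (⇑e) = Finset.univ.val := by
    have := congrArg Finset.val (Finset.map_univ_equiv e)
    simpa [Finset.map] using this
  rw [show (f ∘ ⇑e) = f ∘ ⇑e from rfl, ← Multiset.map_map, h]

private lemma USep.sub_mul (τ : Equiv.Perm n) (M N : Matrix n n ℂ) :
    (M.submatrix τ id) * N = (M * N).submatrix τ id := by
  simpa using Matrix.submatrix_mul_equiv M N (⇑τ) (Equiv.refl n) id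

private lemma USep.sub_mul_sub (τ : Equiv.Perm n) (M N : Matrix n n ℂ) :
    (M.submatrix τ id) * (N.submatrix id τ) = (M * N).submatrix τ τ := by
  simpa using Matrix.submatrix_mul_equiv M N (⇑τ) (Equiv.refl n) (⇑τ)

private lemma USep.conjT_sub (M : Matrix n n ℂ) (τ : Equiv.Perm n) :
    (M.submatrix τ id)ᴴ = Mᴴ.submatrix id τ := by
  simp [Matrix.conjTranspose_submatrix]

end Helpers

/-- A trace-1 Hermitian positive semidefinite 4×4 coherence matrix with eigenvalues
`l1 ≥ l2 ≥ l3 ≥ l4 ≥ 0` can be brought by a global unitary to a Kronecker product of two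
2×2 Hermitian positive semidefinite trace-1 matrices iff `l1 l4 = l2 l3`. -/
theorem unitarily_separable_iff_eigenvalue_condition
    (G : Matrix (Fin 2 × Fin 2) (Fin 2 × Fin 2) ℂ) (hG : G.PosSemidef)
    (htr : G.trace = 1)
    (l1 l2 l3 l4 : ℝ) (h21 : l2 ≤ l1) (h32 : l3 ≤ l2) (h43 : l4 ≤ l3) (h4 : 0 ≤ l4)
    (heig : Finset.univ.val.map hG.isHermitian.eigenvalues =
      ({l1, l2, l3, l4} : Multiset ℝ)) :
    (∃ (U : Matrix (Fin 2 × Fin 2) (Fin 2 × Fin 2) ℂ) (A B : Matrix (Fin 2) (Fin 2) ℂ),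
        U * Uᴴ = 1 ∧ A.PosSemidef ∧ A.trace = 1 ∧ B.PosSemidef ∧ B.trace = 1 ∧
          U * G * Uᴴ = A ⊗ₖ B) ↔
      l1 * l4 = l2 * l3 := by
  have huniv : (Finset.univ.val : Multiset (Fin 2 × Fin 2)) = {(0,0),(0,1),(1,0),(1,1)} := by
    decide
  constructor
  · -- forward direction
    rintro ⟨U, A, B, hU, hA, hAtr, hB, hBtr, hUG⟩
    have hU' : Uᴴ * U = 1 := mul_eq_one_comm.mp hU
    have hα : ∀ i, 0 ≤ hA.1.eigenvalues i := hA.eigenvalues_nonneg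
    have hβ : ∀ i, 0 ≤ hB.1.eigenvalues i := hB.eigenvalues_nonneg
    set α := hA.1.eigenvalues with hαdef
    set β := hB.1.eigenvalues with hβdef
    obtain ⟨VA, hVA, hAspec⟩ : ∃ V : Matrix (Fin 2) (Fin 2) ℂ, V * Vᴴ = 1 ∧
        A = V * Matrix.diagonal (fun i => ((α i : ℝ) : ℂ)) * Vᴴ :=
      ⟨hA.1.eigenvectorUnitary,
        by rw [← Matrix.star_eq_conjTranspose]
           exact Matrix.mem_unitaryGroup_iff.mp hA.1.eigenvectorUnitary.2,
        hA.1.spectral_theorem⟩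
    obtain ⟨VB, hVB, hBspec⟩ : ∃ V : Matrix (Fin 2) (Fin 2) ℂ, V * Vᴴ = 1 ∧
        B = V * Matrix.diagonal (fun i => ((β i : ℝ) : ℂ)) * Vᴴ :=
      ⟨hB.1.eigenvectorUnitary,
        by rw [← Matrix.star_eq_conjTranspose]
           exact Matrix.mem_unitaryGroup_iff.mp hB.1.eigenvectorUnitary.2,
        hB.1.spectral_theorem⟩
    have hAB : A ⊗ₖ B = (VA ⊗ₖ VB)
        * Matrix.diagonal (fun p : Fin 2 × Fin 2 => ((α p.1 * β p.2 : ℝ) : ℂ))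
        * (VA ⊗ₖ VB)ᴴ := by
      rw [hAspec, hBspec, Matrix.mul_kronecker_mul, Matrix.mul_kronecker_mul,
        ← USep.kron_conjT, Matrix.diagonal_kronecker_diagonal]
      congr 2
      funext p
      push_cast
      rfl
    set W := Uᴴ * (VA ⊗ₖ VB) with hWdef
    have hWU : W * Wᴴ = 1 := by
      rw [hWdef, Matrix.conjTranspose_mul, Matrix.conjTranspose_conjTranspose,
        Matrix.mul_assoc, ← Matrix.mul_assoc (VA ⊗ₖ VB), USep.kron_conjT,
        ← Matrix.mul_kronecker_mul, hVA, hVB, Matrix.one_kronecker_one, Matrix.one_mul, hU']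
    have hGW : G = W * Matrix.diagonal
        (fun p : Fin 2 × Fin 2 => ((α p.1 * β p.2 : ℝ) : ℂ)) * Wᴴ := by
      have : G = Uᴴ * (A ⊗ₖ B) * U := by
        calc G = (Uᴴ * U) * G * (Uᴴ * U) := by rw [hU']; simp
        _ = Uᴴ * (U * G * Uᴴ) * U := by noncomm_ring
        _ = Uᴴ * (A ⊗ₖ B) * U := by rw [hUG]
      rw [this, hAB, hWdef]
      rw [Matrix.conjTranspose_mul, Matrix.conjTranspose_conjTranspose]
      noncomm_ring
    have hms := USep.eig_multiset hG.isHermitian hWU hGW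
    rw [heig, huniv] at hms
    simp only [Multiset.insert_eq_cons, Multiset.map_cons, Multiset.map_singleton] at hms
    rcases le_total (α 1) (α 0) with ha | ha <;> rcases le_total (β 1) (β 0) with hb | hb
    · exact USep.core h21 h32 h43 (hα 1) ha (hβ 1) hb hms
    · refine USep.core h21 h32 h43 (hα 1) ha (hβ 0) hb ?_
      simp only [Multiset.insert_eq_cons]; rw [hms]; exact USep.ms_swap2 _ _ _ _
    · refine USep.core h21 h32 h43 (hα 0) ha (hβ 1) hb ?_
      simp only [Multiset.insert_eq_cons]; rw [hms]; exact USep.ms_block _ _ _ _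
    · refine USep.core h21 h32 h43 (hα 0) ha (hβ 0) hb ?_
      simp only [Multiset.insert_eq_cons]; rw [hms]; exact USep.ms_rev _ _ _ _
  · -- backward direction
    intro hcond
    set ev := hG.isHermitian.eigenvalues with hevdef
    have hevnn : ∀ p, 0 ≤ ev p := hG.eigenvalues_nonneg
    -- sum of eigenvalues is 1
    have hsum : l1 + l2 + l3 + l4 = 1 := by
      have h1 : ∑ p, ev p = l1 + l2 + l3 + l4 := by
        rw [Finset.sum, heig]
        simp [Multiset.sum_cons]
        ring
      have h2 : G.trace = ((∑ p, ev p : ℝ) : ℂ) := by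
        conv_lhs => rw [hG.isHermitian.spectral_theorem]
        rw [Unitary.conjStarAlgAut_apply, Matrix.star_eq_conjTranspose, Matrix.trace_mul_cycle]
        have : (hG.isHermitian.eigenvectorUnitary : Matrix (Fin 2 × Fin 2) (Fin 2 × Fin 2) ℂ)ᴴ
            * (hG.isHermitian.eigenvectorUnitary : Matrix (Fin 2 × Fin 2) (Fin 2 × Fin 2) ℂ)
            = 1 := by
          rw [← Matrix.star_eq_conjTranspose]
          exact Matrix.mem_unitaryGroup_iff'.mp hG.isHermitian.eigenvectorUnitary.2
        rw [this, Matrix.one_mul, Matrix.trace_diagonal]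
        push_cast
        rfl
      rw [htr, h1] at h2
      exact_mod_cast h2.symm
    -- sort eigenvalues
    set v : Fin 4 → ℝ := ev ∘ USep.c4 with hvdef
    set σ := Tuple.sort v with hσdef
    have hmono : Monotone (v ∘ σ) := Tuple.monotone_sort v
    have hmsv : Finset.univ.val.map (v ∘ σ) = ({l1,l2,l3,l4} : Multiset ℝ) := by
      rw [show (v ∘ ⇑σ) = (v ∘ ⇑σ) from rfl, USep.ms_equiv σ v, hvdef,
        USep.ms_equiv USep.c4 ev, heig]
    have huniv4 : (Finset.univ.val : Multiset (Fin 4)) = {0,1,2,3} := by decide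
    rw [huniv4] at hmsv
    simp only [Multiset.insert_eq_cons, Multiset.map_cons, Multiset.map_singleton] at hmsv
    have hm' : ({l1,l2,l3,l4} : Multiset ℝ)
        = {(v ∘ σ) 3, (v ∘ σ) 2, (v ∘ σ) 1, (v ∘ σ) 0} := by
      simp only [Multiset.insert_eq_cons]; rw [← hmsv]; exact USep.ms_rev _ _ _ _
    obtain ⟨e1, e2, e3, e4⟩ := USep.quad_aux h21 h32 h43
      (hmono (by decide : (2:Fin 4) ≤ 3)) (hmono (by decide : (1:Fin 4) ≤ 2))
      (hmono (by decide : (0:Fin 4) ≤ 1)) hm'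
    -- the permutation
    set τ : Equiv.Perm (Fin 2 × Fin 2) :=
      USep.c4.symm.trans (Fin.revPerm.trans (σ.trans USep.c4)) with hτdef
    have hτval : ∀ j : Fin 4, ev (τ (USep.c4 j)) = v (σ (Fin.rev j)) := by
      intro j
      simp [hτdef, hvdef, Equiv.trans_apply]
    -- eigenvector unitary
    obtain ⟨V, hV', hdiag⟩ : ∃ V : Matrix (Fin 2 × Fin 2) (Fin 2 × Fin 2) ℂ, Vᴴ * V = 1 ∧
        Vᴴ * G * V = Matrix.diagonal (fun p => ((ev p : ℝ) : ℂ)) :=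
      ⟨hG.isHermitian.eigenvectorUnitary,
        by rw [← Matrix.star_eq_conjTranspose]
           exact Matrix.mem_unitaryGroup_iff'.mp hG.isHermitian.eigenvectorUnitary.2,
        by
          have hs := hG.isHermitian.spectral_theorem
          rw [Unitary.conjStarAlgAut_apply] at hs
          calc _ = _ := congrArg (fun X => (hG.isHermitian.eigenvectorUnitary
                : Matrix (Fin 2 × Fin 2) (Fin 2 × Fin 2) ℂ)ᴴ * X
                * (hG.isHermitian.eigenvectorUnitary : Matrix (Fin 2 × Fin 2) (Fin 2 × Fin 2) ℂ)) hs
          _ = _ := by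
            rw [← Matrix.star_eq_conjTranspose]
            simp only [← mul_assoc, Unitary.coe_star_mul_self, one_mul]
            simp only [mul_assoc, Unitary.coe_star_mul_self, mul_one]
            rfl⟩
    have hV : V * Vᴴ = 1 := mul_eq_one_comm.mp hV'
    refine ⟨Vᴴ.submatrix τ id,
      Matrix.diagonal ![((l1 + l2 : ℝ) : ℂ), ((l3 + l4 : ℝ) : ℂ)],
      Matrix.diagonal ![((l1 + l3 : ℝ) : ℂ), ((l2 + l4 : ℝ) : ℂ)], ?_, ?_, ?_, ?_, ?_, ?_⟩
    · rw [USep.conjT_sub, Matrix.conjTranspose_conjTranspose, USep.sub_mul_sub, hV',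
        Matrix.submatrix_one_equiv]
    · refine Matrix.posSemidef_diagonal_iff.mpr fun i => ?_
      fin_cases i <;> simp [← Complex.ofReal_add, Complex.zero_le_real] <;> linarith
    · simp [Matrix.trace_diagonal, Fin.sum_univ_two]
      norm_cast; linarith
    · refine Matrix.posSemidef_diagonal_iff.mpr fun i => ?_
      fin_cases i <;> simp [← Complex.ofReal_add, Complex.zero_le_real] <;> linarith
    · simp [Matrix.trace_diagonal, Fin.sum_univ_two]
      norm_cast; linarith
    · -- the main computation
      have hGd : G = V * Matrix.diagonal (fun p => ((ev p : ℝ) : ℂ)) * Vᴴ := by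
        calc G = (V * Vᴴ) * G * (V * Vᴴ) := by rw [hV]; simp
        _ = V * (Vᴴ * G * V) * Vᴴ := by noncomm_ring
        _ = _ := by rw [hdiag]
      rw [USep.conjT_sub, Matrix.conjTranspose_conjTranspose, hGd]
      rw [show Vᴴ.submatrix τ id * (V * Matrix.diagonal (fun p => ((ev p : ℝ) : ℂ)) * Vᴴ)
          = (Vᴴ * (V * Matrix.diagonal (fun p => ((ev p : ℝ) : ℂ)) * Vᴴ)).submatrix τ id
          from USep.sub_mul τ _ _]
      rw [USep.sub_mul_sub]
      have hmid : (Vᴴ * (V * Matrix.diagonal (fun p => ((ev p : ℝ) : ℂ)) * Vᴴ)) * V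
          = Matrix.diagonal (fun p => ((ev p : ℝ) : ℂ)) := by
        calc (Vᴴ * (V * Matrix.diagonal (fun p => ((ev p : ℝ) : ℂ)) * Vᴴ)) * V
            = (Vᴴ * V) * Matrix.diagonal (fun p => ((ev p : ℝ) : ℂ)) * (Vᴴ * V) := by
              noncomm_ring
        _ = _ := by rw [hV']; simp
      rw [hmid, Matrix.submatrix_diagonal_equiv, Matrix.diagonal_kronecker_diagonal]
      have key : ∀ p : Fin 2 × Fin 2, ev (τ p) = v (σ (Fin.rev (USep.c4.symm p))) := by
        intro p
        simpa using hτval (USep.c4.symm p)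
      have k00 : ev (τ ((0:Fin 2),(0:Fin 2))) = l1 := by
        rw [key, show ((USep.c4.symm ((0:Fin 2),(0:Fin 2))).rev) = (3:Fin 4) from by decide]
        exact e1.symm
      have k01 : ev (τ ((0:Fin 2),(1:Fin 2))) = l2 := by
        rw [key, show ((USep.c4.symm ((0:Fin 2),(1:Fin 2))).rev) = (2:Fin 4) from by decide]
        exact e2.symm
      have k10 : ev (τ ((1:Fin 2),(0:Fin 2))) = l3 := by
        rw [key, show ((USep.c4.symm ((1:Fin 2),(0:Fin 2))).rev) = (1:Fin 4) from by decide]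
        exact e3.symm
      have k11 : ev (τ ((1:Fin 2),(1:Fin 2))) = l4 := by
        rw [key, show ((USep.c4.symm ((1:Fin 2),(1:Fin 2))).rev) = (0:Fin 4) from by decide]
        exact e4.symm
      have hfun : ((fun p : Fin 2 × Fin 2 => ((ev p : ℝ) : ℂ)) ∘ ⇑τ)
          = fun mn : Fin 2 × Fin 2 =>
            ![((l1 + l2 : ℝ) : ℂ), ((l3 + l4 : ℝ) : ℂ)] mn.1
            * ![((l1 + l3 : ℝ) : ℂ), ((l2 + l4 : ℝ) : ℂ)] mn.2 := by
        funext p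
        rcases p with ⟨k, i⟩
        fin_cases k <;> fin_cases i
        · show ((ev (τ ((0:Fin 2),(0:Fin 2))) : ℝ) : ℂ) = ((l1+l2 : ℝ):ℂ) * ((l1+l3 : ℝ):ℂ)
          rw [k00]; norm_cast; linear_combination (-l1) * hsum + hcond
        · show ((ev (τ ((0:Fin 2),(1:Fin 2))) : ℝ) : ℂ) = ((l1+l2 : ℝ):ℂ) * ((l2+l4 : ℝ):ℂ)
          rw [k01]; norm_cast; linear_combination (-l2) * hsum - hcond
        · show ((ev (τ ((1:Fin 2),(0:Fin 2))) : ℝ) : ℂ) = ((l3+l4 : ℝ):ℂ) * ((l1+l3 : ℝ):ℂ)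
          rw [k10]; norm_cast; linear_combination (-l3) * hsum - hcond
        · show ((ev (τ ((1:Fin 2),(1:Fin 2))) : ℝ) : ℂ) = ((l3+l4 : ℝ):ℂ) * ((l2+l4 : ℝ):ℂ)
          rw [k11]; norm_cast; linear_combination (-l4) * hsum + hcond
      rw [hfun]
end

section
/- Let G be a 4×4 complex Hermitian positive semidefinite matrix indexed by (Fin 2) × (Fin 2) with trace 1. Define the reduced spatial coherence matrix G_s (2×2, entries (G_s) k l = ∑_i G (k,i) (l,i)) and the reduced polarization coherence matrix G_p (2×2, entries (G_p) i j = ∑_k G (k,i) (k,j)). Then the entropies satisfy the subadditivity inequality S(G) ≤ S(G_s) + S(G_p), where the entropy of a Hermitian positive semidefinite trace-1 matrix is S = −∑_j μ_j log₂ μ_j over its eigenvalues μ_j, with the convention 0 · log₂ 0 = 0. -/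
open Matrix ComplexOrder

/-- The von Neumann entropy (base 2) of a Hermitian matrix:
`S = -∑ μ_j log₂ μ_j` over its eigenvalues, with `0 · log₂ 0 = 0`
(automatic since `Real.logb 2 0 = 0`). -/
noncomputable def entropy {n : Type*} [Fintype n] [DecidableEq n] {M : Matrix n n ℂ}
    (hM : M.IsHermitian) : ℝ :=
  -∑ i, hM.eigenvalues i * Real.logb 2 (hM.eigenvalues i)

/-- The reduced spatial coherence matrix: trace out the polarization index. -/
noncomputable def redS (G : Matrix (Fin 2 × Fin 2) (Fin 2 × Fin 2) ℂ) :
    Matrix (Fin 2) (Fin 2) ℂ :=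
  Matrix.of fun k l => ∑ i, G (k, i) (l, i)

/-- The reduced polarization coherence matrix: trace out the spatial index. -/
noncomputable def redP (G : Matrix (Fin 2 × Fin 2) (Fin 2 × Fin 2) ℂ) :
    Matrix (Fin 2) (Fin 2) ℂ :=
  Matrix.of fun i j => ∑ k, G (k, i) (k, j)

section aux

lemma jensen_log' {ι : Type*} [Fintype ι] (w x : ι → ℝ) (hw : ∀ j, 0 ≤ w j)
    (hx : ∀ j, 0 ≤ x j) (hw1 : ∑ j, w j = 1) (hz : ∀ j, x j = 0 → w j = 0) :
    ∑ j, w j * Real.log (x j) ≤ Real.log (∑ j, w j * x j) := by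
  have hr0 : 0 ≤ ∑ j, w j * x j := Finset.sum_nonneg fun j _ => mul_nonneg (hw j) (hx j)
  rcases hr0.eq_or_lt with h | hr
  · -- sum is zero
    have hall : ∀ j ∈ Finset.univ, w j * x j = 0 := by
      rw [← Finset.sum_eq_zero_iff_of_nonneg (fun j _ => mul_nonneg (hw j) (hx j))]
      exact h.symm
    have : ∀ j ∈ Finset.univ, w j * Real.log (x j) = 0 := by
      intro j _
      rcases eq_or_ne (x j) 0 with hxj | hxj
      · simp [hxj]
      · have := hall j (Finset.mem_univ j)
        have : w j = 0 := by
          rcases mul_eq_zero.mp this with h' | h'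
          · exact h'
          · exact absurd h' hxj
        simp [this]
    rw [Finset.sum_congr rfl this, ← h]
    simp
  · set r := ∑ j, w j * x j with hrdef
    have hterm : ∀ j, w j * Real.log (x j) ≤ w j * (Real.log r + x j / r - 1) := by
      intro j
      rcases (hw j).eq_or_lt with hwj | hwj
      · simp [← hwj]
      · have hxj : 0 < x j := by
          rcases (hx j).eq_or_lt with h' | h'
          · exact absurd (hz j h'.symm) (ne_of_gt hwj)
          · exact h'
        have := Real.log_le_sub_one_of_pos (div_pos hxj hr)
        rw [Real.log_div (ne_of_gt hxj) (ne_of_gt hr)] at this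
        have : Real.log (x j) ≤ Real.log r + x j / r - 1 := by linarith
        exact mul_le_mul_of_nonneg_left this (hw j)
    calc ∑ j, w j * Real.log (x j) ≤ ∑ j, w j * (Real.log r + x j / r - 1) :=
          Finset.sum_le_sum fun j _ => hterm j
      _ = Real.log r := by
          simp only [mul_sub, mul_add, Finset.sum_sub_distrib, Finset.sum_add_distrib,
            ← Finset.sum_mul, hw1, one_mul, mul_div_assoc]
          have : ∑ j, w j * (x j / r) = 1 := by
            simp only [← mul_div_assoc]
            rw [← Finset.sum_div, ← hrdef, div_self (ne_of_gt hr)]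
          rw [this]; ring

lemma gibbs' {ι : Type*} [Fintype ι] (l r : ι → ℝ) (hl : ∀ m, 0 ≤ l m) (hr : ∀ m, 0 ≤ r m)
    (hsum : ∑ m, r m = ∑ m, l m) (hz : ∀ m, r m = 0 → l m = 0) :
    ∑ m, l m * Real.log (r m) ≤ ∑ m, l m * Real.log (l m) := by
  have hterm : ∀ m, l m * Real.log (r m) ≤ l m * Real.log (l m) - l m + r m := by
    intro m
    rcases (hl m).eq_or_lt with hlm | hlm
    · simp [← hlm, hr m]
    · have hrm : 0 < r m := by
        rcases (hr m).eq_or_lt with h' | h'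
        · exact absurd (hz m h'.symm) (ne_of_gt hlm)
        · exact h'
      have := Real.log_le_sub_one_of_pos (div_pos hrm hlm)
      rw [Real.log_div (ne_of_gt hrm) (ne_of_gt hlm)] at this
      have h2 : l m * (Real.log (r m) - Real.log (l m)) ≤ l m * (r m / l m - 1) :=
        mul_le_mul_of_nonneg_left this (hl m)
      rw [mul_sub, mul_sub, mul_div_cancel₀ _ (ne_of_gt hlm)] at h2
      linarith
  calc ∑ m, l m * Real.log (r m) ≤ ∑ m, (l m * Real.log (l m) - l m + r m) :=
        Finset.sum_le_sum fun m _ => hterm m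
    _ = ∑ m, l m * Real.log (l m) := by
        rw [Finset.sum_add_distrib, Finset.sum_sub_distrib, hsum]; ring

lemma key_ineq {ι κ : Type*} [Fintype ι] [Fintype κ] (lam : ι → ℝ) (T : ι → κ → ℝ) (q : κ → ℝ)
    (hlam : ∀ m, 0 ≤ lam m) (hT : ∀ m x, 0 ≤ T m x) (hq : ∀ x, 0 ≤ q x)
    (hrow : ∀ m, ∑ x, T m x = 1) (hcol : ∀ x, ∑ m, T m x = 1)
    (hsum : ∑ x, q x = ∑ m, lam m)
    (hz : ∀ m x, q x = 0 → lam m * T m x = 0) :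
    ∑ x, (∑ m, lam m * T m x) * Real.log (q x) ≤ ∑ m, lam m * Real.log (lam m) := by
  set r : ι → ℝ := fun m => ∑ x, T m x * q x with hrdef
  have step1 : ∑ x, (∑ m, lam m * T m x) * Real.log (q x)
      = ∑ m, lam m * ∑ x, T m x * Real.log (q x) := by
    simp only [Finset.sum_mul, Finset.mul_sum]
    rw [Finset.sum_comm]
    congr 1; ext m; congr 1; ext x; ring
  rw [step1]
  have step2 : ∀ m, lam m * ∑ x, T m x * Real.log (q x) ≤ lam m * Real.log (r m) := by
    intro m
    rcases (hlam m).eq_or_lt with hlm | hlm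
    · simp [← hlm]
    · refine mul_le_mul_of_nonneg_left ?_ (hlam m)
      exact jensen_log' (T m) q (hT m) hq (hrow m)
        (fun j hj => by
          have := hz m j hj
          rcases mul_eq_zero.mp this with h' | h'
          · exact absurd h' (ne_of_gt hlm)
          · exact h')
  calc ∑ m, lam m * ∑ x, T m x * Real.log (q x) ≤ ∑ m, lam m * Real.log (r m) :=
        Finset.sum_le_sum fun m _ => step2 m
    _ ≤ ∑ m, lam m * Real.log (lam m) := by
        refine gibbs' lam r hlam (fun m => Finset.sum_nonneg fun x _ => mul_nonneg (hT m x) (hq x)) ?_ ?_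
        · rw [hrdef]
          rw [Finset.sum_comm]
          rw [← hsum]
          congr 1; ext x
          rw [← Finset.sum_mul, hcol x, one_mul]
        · intro m hm0
          have hm : ∑ x, T m x * q x = 0 := hm0
          by_contra hlm
          have hlm' : 0 < lam m := (hlam m).lt_of_ne (Ne.symm hlm)
          have hall : ∀ x ∈ Finset.univ, T m x * q x = 0 := by
            rw [← Finset.sum_eq_zero_iff_of_nonneg (fun x _ => mul_nonneg (hT m x) (hq x))]
            exact hm
          have hT0 : ∀ x ∈ Finset.univ, T m x = 0 := by
            intro x _
            rcases eq_or_ne (q x) 0 with hqx | hqx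
            · have := hz m x hqx
              rcases mul_eq_zero.mp this with h' | h'
              · exact absurd h' (ne_of_gt hlm')
              · exact h'
            · rcases mul_eq_zero.mp (hall x (Finset.mem_univ x)) with h' | h'
              · exact h'
              · exact absurd h' hqx
          have := hrow m
          rw [Finset.sum_congr rfl hT0] at this
          simp at this

open Kronecker in
lemma redS_conj (E F : Matrix (Fin 2) (Fin 2) ℂ) (G : Matrix (Fin 2 × Fin 2) (Fin 2 × Fin 2) ℂ)
    (hF : F * Fᴴ = 1) (k l : Fin 2) :
    ∑ i, ((E ⊗ₖ F)ᴴ * G * (E ⊗ₖ F)) (k,i) (l,i) = (Eᴴ * redS G * E) k l := by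
  have h : ∀ i j : Fin 2, F i 0 * star (F j 0) + F i 1 * star (F j 1)
      = if i = j then (1:ℂ) else 0 := by
    intro i j
    have := congrFun (congrFun hF i) j
    simpa [Matrix.mul_apply, Fin.sum_univ_two, Matrix.conjTranspose_apply,
      Matrix.one_apply] using this
  have h00 := h 0 0; have h01 := h 0 1; have h10 := h 1 0; have h11 := h 1 1
  simp only [Matrix.mul_apply, Matrix.conjTranspose_apply, Matrix.kroneckerMap_apply,
    redS, Matrix.of_apply, Fintype.sum_prod_type, Fin.sum_univ_two, star_mul',
    Finset.sum_mul, Finset.mul_sum] at *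
  simp only [if_true, eq_self_iff_true] at h00 h11
  norm_num at h01 h10
  simp only [starRingEnd_apply] at h01 h10 ⊢
  linear_combination
    (star (E 0 k) * G (0,0) (0,0) * E 0 l + star (E 0 k) * G (0,0) (1,0) * E 1 l
      + star (E 1 k) * G (1,0) (0,0) * E 0 l + star (E 1 k) * G (1,0) (1,0) * E 1 l) * h00
    + (star (E 0 k) * G (0,1) (0,0) * E 0 l + star (E 0 k) * G (0,1) (1,0) * E 1 l
      + star (E 1 k) * G (1,1) (0,0) * E 0 l + star (E 1 k) * G (1,1) (1,0) * E 1 l) * h01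
    + (star (E 0 k) * G (0,0) (0,1) * E 0 l + star (E 0 k) * G (0,0) (1,1) * E 1 l
      + star (E 1 k) * G (1,0) (0,1) * E 0 l + star (E 1 k) * G (1,0) (1,1) * E 1 l) * h10
    + (star (E 0 k) * G (0,1) (0,1) * E 0 l + star (E 0 k) * G (0,1) (1,1) * E 1 l
      + star (E 1 k) * G (1,1) (0,1) * E 0 l + star (E 1 k) * G (1,1) (1,1) * E 1 l) * h11

open Kronecker in
lemma redP_conj (E F : Matrix (Fin 2) (Fin 2) ℂ) (G : Matrix (Fin 2 × Fin 2) (Fin 2 × Fin 2) ℂ)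
    (hE : E * Eᴴ = 1) (i j : Fin 2) :
    ∑ k, ((E ⊗ₖ F)ᴴ * G * (E ⊗ₖ F)) (k,i) (k,j) = (Fᴴ * redP G * F) i j := by
  have h : ∀ a b : Fin 2, E a 0 * star (E b 0) + E a 1 * star (E b 1)
      = if a = b then (1:ℂ) else 0 := by
    intro a b
    have := congrFun (congrFun hE a) b
    simpa [Matrix.mul_apply, Fin.sum_univ_two, Matrix.conjTranspose_apply,
      Matrix.one_apply] using this
  have h00 := h 0 0; have h01 := h 0 1; have h10 := h 1 0; have h11 := h 1 1
  simp only [Matrix.mul_apply, Matrix.conjTranspose_apply, Matrix.kroneckerMap_apply,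
    redP, Matrix.of_apply, Fintype.sum_prod_type, Fin.sum_univ_two, star_mul',
    Finset.sum_mul, Finset.mul_sum] at *
  simp only [if_true, eq_self_iff_true] at h00 h11
  norm_num at h01 h10
  simp only [starRingEnd_apply] at h01 h10 ⊢
  linear_combination
    (star (F 0 i) * G (0,0) (0,0) * F 0 j + star (F 0 i) * G (0,0) (0,1) * F 1 j
      + star (F 1 i) * G (0,1) (0,0) * F 0 j + star (F 1 i) * G (0,1) (0,1) * F 1 j) * h00
    + (star (F 0 i) * G (1,0) (0,0) * F 0 j + star (F 0 i) * G (1,0) (0,1) * F 1 j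
      + star (F 1 i) * G (1,1) (0,0) * F 0 j + star (F 1 i) * G (1,1) (0,1) * F 1 j) * h01
    + (star (F 0 i) * G (0,0) (1,0) * F 0 j + star (F 0 i) * G (0,0) (1,1) * F 1 j
      + star (F 1 i) * G (0,1) (1,0) * F 0 j + star (F 1 i) * G (0,1) (1,1) * F 1 j) * h10
    + (star (F 0 i) * G (1,0) (1,0) * F 0 j + star (F 0 i) * G (1,0) (1,1) * F 1 j
      + star (F 1 i) * G (1,1) (1,0) * F 0 j + star (F 1 i) * G (1,1) (1,1) * F 1 j) * h11

end aux

open Kronecker in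
/-- Subadditivity of entropy: for a trace-1 Hermitian positive semidefinite 4×4 coherence
matrix `G`, `S(G) ≤ S(G_s) + S(G_p)`, where `G_s`, `G_p` are the reduced spatial and
polarization coherence matrices. -/
theorem entropy_subadditive
    (G : Matrix (Fin 2 × Fin 2) (Fin 2 × Fin 2) ℂ) (hG : G.PosSemidef)
    (htr : G.trace = 1)
    (hs : (redS G).IsHermitian) (hp : (redP G).IsHermitian) :
    entropy hG.isHermitian ≤ entropy hs + entropy hp := by
  classical
  set lam : (Fin 2 × Fin 2) → ℝ := hG.isHermitian.eigenvalues with hlamdef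
  set a : Fin 2 → ℝ := hs.eigenvalues with hadef
  set b : Fin 2 → ℝ := hp.eigenvalues with hbdef
  set U : Matrix (Fin 2 × Fin 2) (Fin 2 × Fin 2) ℂ := ↑hG.isHermitian.eigenvectorUnitary with hUdef
  set E : Matrix (Fin 2) (Fin 2) ℂ := ↑hs.eigenvectorUnitary with hEdef
  set F : Matrix (Fin 2) (Fin 2) ℂ := ↑hp.eigenvectorUnitary with hFdef
  have hU1 : U * Uᴴ = 1 := by
    rw [← Matrix.star_eq_conjTranspose]
    exact (Matrix.mem_unitaryGroup_iff).mp hG.isHermitian.eigenvectorUnitary.2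
  have hU2 : Uᴴ * U = 1 := by
    rw [← Matrix.star_eq_conjTranspose]
    exact (Matrix.mem_unitaryGroup_iff').mp hG.isHermitian.eigenvectorUnitary.2
  have hE1 : E * Eᴴ = 1 := by
    rw [← Matrix.star_eq_conjTranspose]
    exact (Matrix.mem_unitaryGroup_iff).mp hs.eigenvectorUnitary.2
  have hE2 : Eᴴ * E = 1 := by
    rw [← Matrix.star_eq_conjTranspose]
    exact (Matrix.mem_unitaryGroup_iff').mp hs.eigenvectorUnitary.2
  have hF1 : F * Fᴴ = 1 := by
    rw [← Matrix.star_eq_conjTranspose]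
    exact (Matrix.mem_unitaryGroup_iff).mp hp.eigenvectorUnitary.2
  have hF2 : Fᴴ * F = 1 := by
    rw [← Matrix.star_eq_conjTranspose]
    exact (Matrix.mem_unitaryGroup_iff').mp hp.eigenvectorUnitary.2
  set W : Matrix (Fin 2 × Fin 2) (Fin 2 × Fin 2) ℂ := E ⊗ₖ F with hWdef
  have hWH : Wᴴ = Eᴴ ⊗ₖ Fᴴ := by
    ext ⟨p1, p2⟩ ⟨q1, q2⟩
    simp [hWdef, Matrix.conjTranspose_apply, Matrix.kroneckerMap_apply, star_mul', mul_comm]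
  have hW1 : W * Wᴴ = 1 := by
    rw [hWH, hWdef, ← Matrix.mul_kronecker_mul, hE1, hF1, Matrix.one_kronecker_one]
  have hW2 : Wᴴ * W = 1 := by
    rw [hWH, hWdef, ← Matrix.mul_kronecker_mul, hE2, hF2, Matrix.one_kronecker_one]
  set V : Matrix (Fin 2 × Fin 2) (Fin 2 × Fin 2) ℂ := Uᴴ * W with hVdef
  have hVH : Vᴴ = Wᴴ * U := by
    rw [hVdef, Matrix.conjTranspose_mul, Matrix.conjTranspose_conjTranspose]
  have hV1 : V * Vᴴ = 1 := by
    rw [hVdef, hVH, Matrix.mul_assoc, ← Matrix.mul_assoc W, hW1, Matrix.one_mul, hU2]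
  have hV2 : Vᴴ * V = 1 := by
    rw [hVdef, hVH, Matrix.mul_assoc, ← Matrix.mul_assoc U, hU1, Matrix.one_mul, hW2]
  set T : (Fin 2 × Fin 2) → (Fin 2 × Fin 2) → ℝ := fun m x => ‖V m x‖ ^ 2 with hTdef
  have hTnn : ∀ m x, 0 ≤ T m x := fun m x => sq_nonneg _
  have hsq : ∀ z : ℂ, ((‖z‖ ^ 2 : ℝ) : ℂ) = z * star z := by
    intro z
    rw [RCLike.star_def, RCLike.mul_conj]
    norm_cast
  have hTrow : ∀ m, ∑ x, T m x = 1 := by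
    intro m
    have h := congrFun (congrFun hV1 m) m
    rw [Matrix.mul_apply] at h
    simp only [Matrix.conjTranspose_apply, Matrix.one_apply_eq] at h
    have : ((∑ x, T m x : ℝ) : ℂ) = 1 := by
      rw [← h, Complex.ofReal_sum]
      exact Finset.sum_congr rfl fun x _ => hsq (V m x)
    exact_mod_cast this
  have hTcol : ∀ x, ∑ m, T m x = 1 := by
    intro x
    have h := congrFun (congrFun hV2 x) x
    rw [Matrix.mul_apply] at h
    simp only [Matrix.conjTranspose_apply, Matrix.one_apply_eq] at h
    have : ((∑ m, T m x : ℝ) : ℂ) = 1 := by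
      rw [← h, Complex.ofReal_sum]
      exact Finset.sum_congr rfl fun m _ => by rw [hsq (V m x), mul_comm]
    exact_mod_cast this
  have hlamnn : ∀ m, 0 ≤ lam m := fun m => hG.eigenvalues_nonneg m
  set c : (Fin 2 × Fin 2) → ℝ := fun x => ∑ m, lam m * T m x with hcdef
  have hcnn : ∀ x, 0 ≤ c x :=
    fun x => Finset.sum_nonneg fun m _ => mul_nonneg (hlamnn m) (hTnn m x)
  have hGspec : G = U * Matrix.diagonal (RCLike.ofReal ∘ lam) * Uᴴ := by
    rw [← Matrix.star_eq_conjTranspose]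
    exact hG.isHermitian.spectral_theorem
  have hWGW : Wᴴ * G * W = Vᴴ * Matrix.diagonal (RCLike.ofReal ∘ lam) * V := by
    rw [hGspec, hVH, hVdef]
    simp only [Matrix.mul_assoc]
  have hcWGW : ∀ x, ((c x : ℝ) : ℂ) = (Wᴴ * G * W) x x := by
    intro x
    rw [hWGW, Matrix.mul_assoc, Matrix.mul_apply]
    simp only [Matrix.conjTranspose_apply, Matrix.diagonal_mul, Function.comp_apply,
      show (RCLike.ofReal : ℝ → ℂ) = Complex.ofReal from rfl]
    rw [show c x = ∑ m, lam m * T m x from rfl, Complex.ofReal_sum]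
    refine Finset.sum_congr rfl fun m _ => ?_
    rw [Complex.ofReal_mul, show ((T m x : ℝ) : ℂ) = V m x * star (V m x) from hsq (V m x)]
    ring
  have hdiagS : Eᴴ * redS G * E = Matrix.diagonal (RCLike.ofReal ∘ a) := by
    rw [← Matrix.star_eq_conjTranspose]
    exact (Unitary.conjStarAlgAut_star_apply _ _).symm.trans hs.conjStarAlgAut_star_eigenvectorUnitary
  have hdiagP : Fᴴ * redP G * F = Matrix.diagonal (RCLike.ofReal ∘ b) := by
    rw [← Matrix.star_eq_conjTranspose]
    exact (Unitary.conjStarAlgAut_star_apply _ _).symm.trans hp.conjStarAlgAut_star_eigenvectorUnitary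
  have hca : ∀ k, ∑ i, c (k, i) = a k := by
    intro k
    have h1 := redS_conj E F G hF1 k k
    rw [← hWdef, hdiagS] at h1
    simp only [Matrix.diagonal_apply_eq, Function.comp_apply,
      show (RCLike.ofReal : ℝ → ℂ) = Complex.ofReal from rfl] at h1
    have h3 : ((∑ i, c (k, i) : ℝ) : ℂ) = ((a k : ℝ) : ℂ) := by
      rw [Complex.ofReal_sum, ← h1]
      exact Finset.sum_congr rfl fun i _ => hcWGW (k, i)
    exact_mod_cast h3
  have hcb : ∀ i, ∑ k, c (k, i) = b i := by
    intro i
    have h1 := redP_conj E F G hE1 i i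
    rw [← hWdef, hdiagP] at h1
    simp only [Matrix.diagonal_apply_eq, Function.comp_apply,
      show (RCLike.ofReal : ℝ → ℂ) = Complex.ofReal from rfl] at h1
    have h3 : ((∑ k, c (k, i) : ℝ) : ℂ) = ((b i : ℝ) : ℂ) := by
      rw [Complex.ofReal_sum, ← h1]
      exact Finset.sum_congr rfl fun k _ => hcWGW (k, i)
    exact_mod_cast h3
  have hann : ∀ k, 0 ≤ a k := by
    intro k
    rw [← hca k]
    exact Finset.sum_nonneg fun i _ => hcnn _
  have hbnn : ∀ i, 0 ≤ b i := by
    intro i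
    rw [← hcb i]
    exact Finset.sum_nonneg fun k _ => hcnn _
  have hsumlam : ∑ m, lam m = 1 := by
    have h1 : G.trace = ∑ m, ((lam m : ℝ) : ℂ) := by
      rw [hGspec, Matrix.trace_mul_cycle, hU2, Matrix.one_mul, Matrix.trace_diagonal]
      rfl
    rw [htr] at h1
    have h2 : ((∑ m, lam m : ℝ) : ℂ) = ((1 : ℝ) : ℂ) := by
      rw [Complex.ofReal_sum, ← h1, Complex.ofReal_one]
    exact_mod_cast h2
  have hsumc : ∑ x, c x = 1 := by
    calc ∑ x, c x = ∑ m, lam m * ∑ x, T m x := by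
          rw [hcdef]
          rw [Finset.sum_comm]
          simp [Finset.mul_sum]
      _ = 1 := by
          rw [Finset.sum_congr rfl fun m _ => by rw [hTrow m, mul_one]]
          exact hsumlam
  have hsuma : ∑ k, a k = 1 := by
    calc ∑ k, a k = ∑ x : Fin 2 × Fin 2, c x := by
          rw [Fintype.sum_prod_type]
          exact Finset.sum_congr rfl fun k _ => (hca k).symm
      _ = 1 := hsumc
  have hsumb : ∑ i, b i = 1 := by
    calc ∑ i, b i = ∑ x : Fin 2 × Fin 2, c x := by
          rw [Fintype.sum_prod_type, Finset.sum_comm]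
          exact Finset.sum_congr rfl fun i _ => (hcb i).symm
      _ = 1 := hsumc
  set q : (Fin 2 × Fin 2) → ℝ := fun x => a x.1 * b x.2 with hqdef
  have hqnn : ∀ x, 0 ≤ q x := fun x => mul_nonneg (hann _) (hbnn _)
  have hsumq : ∑ x, q x = ∑ m, lam m := by
    rw [hsumlam, hqdef]
    calc ∑ x : Fin 2 × Fin 2, a x.1 * b x.2
        = (∑ k, a k) * (∑ i, b i) := by
          rw [Fintype.sum_mul_sum, Fintype.sum_prod_type]
      _ = 1 := by rw [hsuma, hsumb, one_mul]
  -- c vanishes where a or b vanish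
  have hc0a : ∀ k i, a k = 0 → c (k, i) = 0 := by
    intro k i h0
    have hsum0 : ∑ i', c (k, i') = 0 := by rw [hca k, h0]
    have := (Finset.sum_eq_zero_iff_of_nonneg (fun i' _ => hcnn (k, i'))).mp hsum0
    exact this i (Finset.mem_univ i)
  have hc0b : ∀ k i, b i = 0 → c (k, i) = 0 := by
    intro k i h0
    have hsum0 : ∑ k', c (k', i) = 0 := by rw [hcb i, h0]
    have := (Finset.sum_eq_zero_iff_of_nonneg (fun k' _ => hcnn (k', i))).mp hsum0
    exact this k (Finset.mem_univ k)
  have hc0 : ∀ x, q x = 0 → c x = 0 := by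
    intro x h0
    rcases mul_eq_zero.mp h0 with h | h
    · exact hc0a x.1 x.2 h
    · exact hc0b x.1 x.2 h
  have hz : ∀ m x, q x = 0 → lam m * T m x = 0 := by
    intro m x h0
    have := hc0 x h0
    have hall := (Finset.sum_eq_zero_iff_of_nonneg
      (fun m' _ => mul_nonneg (hlamnn m') (hTnn m' x))).mp this
    exact hall m (Finset.mem_univ m)
  -- the core inequality (natural log)
  have hmain : ∑ x, c x * Real.log (q x) ≤ ∑ m, lam m * Real.log (lam m) :=
    key_ineq lam T q hlamnn hTnn hqnn hTrow hTcol hsumq hz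
  -- split the log of the product
  have hsplit : ∑ x, c x * Real.log (q x)
      = ∑ k, a k * Real.log (a k) + ∑ i, b i * Real.log (b i) := by
    have h1 : ∀ x : Fin 2 × Fin 2, c x * Real.log (q x)
        = c x * Real.log (a x.1) + c x * Real.log (b x.2) := by
      intro x
      rcases eq_or_ne (a x.1) 0 with h | h
      · rw [hc0a x.1 x.2 h]; simp
      · rcases eq_or_ne (b x.2) 0 with h' | h'
        · rw [hc0b x.1 x.2 h']; simp
        · rw [hqdef]
          simp only []
          rw [Real.log_mul h h', mul_add]
    rw [Finset.sum_congr rfl fun x _ => h1 x, Finset.sum_add_distrib]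
    congr 1
    · rw [Fintype.sum_prod_type]
      refine Finset.sum_congr rfl fun k _ => ?_
      show (∑ y : Fin 2, c (k, y) * Real.log (a k)) = a k * Real.log (a k)
      rw [← Finset.sum_mul, hca k]
    · rw [Fintype.sum_prod_type, Finset.sum_comm]
      refine Finset.sum_congr rfl fun i _ => ?_
      show (∑ x : Fin 2, c (x, i) * Real.log (b i)) = b i * Real.log (b i)
      rw [← Finset.sum_mul, hcb i]
  rw [hsplit] at hmain
  -- convert to logb
  have hlog2 : (0:ℝ) < Real.log 2 := Real.log_pos (by norm_num)
  unfold entropy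
  simp only [Real.logb, mul_div_assoc, ← Finset.sum_div]
  rw [← hlamdef, ← hadef, ← hbdef]
  have e1 : ∀ (ι : Type) (_ : Fintype ι) (f : ι → ℝ),
      ∑ x : ι, f x * (Real.log (f x) / Real.log 2) = (∑ x : ι, f x * Real.log (f x)) / Real.log 2 := by
    intro ι _ f
    rw [Finset.sum_div]
    exact Finset.sum_congr rfl fun x _ => (mul_div_assoc _ _ _).symm
  rw [e1 _ _ lam, e1 _ _ a, e1 _ _ b, ← neg_div, ← neg_div, ← neg_div, ← add_div]
  rw [div_le_div_iff_of_pos_right hlog2]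
  linarith [hmain]
end

section
/- Let G be a 4×4 complex Hermitian positive semidefinite matrix indexed by (Fin 2) × (Fin 2) with rank at least 3. Then both the reduced spatial coherence matrix G_s (entries (G_s) k l = ∑_i G (k,i) (l,i)) and the reduced polarization coherence matrix G_p (entries (G_p) i j = ∑_k G (k,i) (k,j)) are positive definite (both of their eigenvalues are strictly positive). Consequently, if additionally trace G = 1, both degrees of freedom carry strictly positive entropy: neither degree of freedom of a rank-3 (or rank-4) field can be free of statistical fluctuations. -/
open Matrix ComplexOrder

/-- Trace equals the sum of the eigenvalues for a Hermitian matrix. -/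
lemma trace_eq_sum_eigenvalues' {n : Type*} [Fintype n] [DecidableEq n]
    {M : Matrix n n ℂ} (hM : M.IsHermitian) :
    M.trace = ∑ i, (hM.eigenvalues i : ℂ) := by
  exact hM.trace_eq_sum_eigenvalues

/-- A rank ≥ 3 matrix on a 4-dimensional space cannot kill two independent vectors. -/
lemma ker_too_big (G : Matrix (Fin 2 × Fin 2) (Fin 2 × Fin 2) ℂ)
    (hrank : 3 ≤ G.rank) (v0 v1 : Fin 2 × Fin 2 → ℂ)
    (h0 : G *ᵥ v0 = 0) (h1 : G *ᵥ v1 = 0)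
    (hli : LinearIndependent ℂ ![v0, v1]) : False := by
  have hker : Submodule.span ℂ (Set.range ![v0, v1]) ≤ LinearMap.ker G.mulVecLin := by
    rw [Submodule.span_le]
    rintro y ⟨i, rfl⟩
    fin_cases i <;> simpa [Matrix.mulVecLin_apply] using (by assumption : _)
  have h2 : 2 ≤ Module.finrank ℂ (LinearMap.ker G.mulVecLin) := by
    have := finrank_span_eq_card hli
    simpa [this] using Submodule.finrank_mono hker
  have hrn := LinearMap.finrank_range_add_finrank_ker G.mulVecLin
  rw [Module.finrank_fintype_fun_eq_card] at hrn
  have : G.rank = Module.finrank ℂ (LinearMap.range G.mulVecLin) := rfl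
  simp [Fintype.card_prod] at hrn
  omega

/-- A positive-definite 2×2 matrix with unit trace has positive entropy. -/
lemma entropy_pos_of_posDef {M : Matrix (Fin 2) (Fin 2) ℂ}
    (hM : M.PosDef) (htr : M.trace = 1) (h : M.IsHermitian) : 0 < entropy h := by
  have hpos : ∀ i, 0 < h.eigenvalues i := fun i => hM.eigenvalues_pos i
  have hsum : h.eigenvalues 0 + h.eigenvalues 1 = 1 := by
    have := trace_eq_sum_eigenvalues' h
    rw [htr, Fin.sum_univ_two] at this
    exact_mod_cast this.symm
  have hlt : ∀ i, h.eigenvalues i < 1 := by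
    have h0 := hpos 0; have h1 := hpos 1
    intro i
    fin_cases i
    · show h.eigenvalues 0 < 1; linarith
    · show h.eigenvalues 1 < 1; linarith
  have hterm : ∀ i, h.eigenvalues i * Real.logb 2 (h.eigenvalues i) < 0 := fun i =>
    mul_neg_of_pos_of_neg (hpos i) (Real.logb_neg one_lt_two (hpos i) (hlt i))
  have : ∑ i, h.eigenvalues i * Real.logb 2 (h.eigenvalues i) < 0 := by
    rw [Fin.sum_univ_two]
    have := hterm 0; have := hterm 1; linarith
  simpa [entropy] using neg_pos.mpr this

/-- If a Hermitian positive semidefinite 4×4 coherence matrix has rank at least 3, then both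
reduced coherence matrices are positive definite; consequently, if moreover `trace G = 1`,
both degrees of freedom carry strictly positive entropy. -/
theorem reduced_posDef_of_rank_ge_three
    (G : Matrix (Fin 2 × Fin 2) (Fin 2 × Fin 2) ℂ) (hG : G.PosSemidef)
    (hrank : 3 ≤ G.rank) :
    (redS G).PosDef ∧ (redP G).PosDef ∧
      (G.trace = 1 →
        ∀ (hs : (redS G).IsHermitian) (hp : (redP G).IsHermitian),
          0 < entropy hs ∧ 0 < entropy hp) := by
  have hHerm := hG.isHermitian
  -- Hermiticity of the reductions
  have hSH : (redS G).IsHermitian := by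
    ext k l
    simp only [conjTranspose_apply, redS, of_apply, star_sum]
    exact Finset.sum_congr rfl fun i _ => congrFun (congrFun hHerm (k, i)) (l, i)
  have hPH : (redP G).IsHermitian := by
    ext i j
    simp only [conjTranspose_apply, redP, of_apply, star_sum]
    exact Finset.sum_congr rfl fun k _ => congrFun (congrFun hHerm (k, i)) (k, j)
  -- positivity of quadratic forms
  have hSpd : (redS G).PosDef := by
    refine Matrix.PosDef.of_dotProduct_mulVec_pos hSH fun x hx => ?_
    set v : Fin 2 → (Fin 2 × Fin 2 → ℂ) := fun i p => if p.2 = i then x p.1 else 0 with hv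
    have hdecomp : star x ⬝ᵥ redS G *ᵥ x = ∑ i, star (v i) ⬝ᵥ G *ᵥ (v i) := by
      simp only [dotProduct, mulVec, redS, of_apply, Pi.star_apply, Fintype.sum_prod_type, hv]
      simp [Finset.mul_sum, Finset.sum_mul]
      ring
    have hterm : ∀ i, 0 ≤ star (v i) ⬝ᵥ G *ᵥ (v i) := fun i => hG.dotProduct_mulVec_nonneg (v i)
    have hnonneg : 0 ≤ star x ⬝ᵥ redS G *ᵥ x := hdecomp ▸ Finset.sum_nonneg fun i _ => hterm i
    rcases hnonneg.lt_or_eq with h | h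
    · exact h
    exfalso
    have hzero : ∀ i, star (v i) ⬝ᵥ G *ᵥ (v i) = 0 := by
      intro i
      have := (Finset.sum_eq_zero_iff_of_nonneg (fun i _ => hterm i)).mp
        (by rw [← hdecomp, ← h])
      exact this i (Finset.mem_univ i)
    have hkv : ∀ i, G *ᵥ (v i) = 0 := fun i =>
      (hG.dotProduct_mulVec_zero_iff (v i)).mp (hzero i)
    obtain ⟨k, hk⟩ := Function.ne_iff.mp hx
    refine ker_too_big G hrank (v 0) (v 1) (hkv 0) (hkv 1) ?_
    rw [LinearIndependent.pair_iff]
    intro s t hst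
    constructor
    · have := congrFun hst (k, 0); simp [hv] at this; exact this.resolve_right hk
    · have := congrFun hst (k, 1); simp [hv] at this; exact this.resolve_right hk
  have hPpd : (redP G).PosDef := by
    refine Matrix.PosDef.of_dotProduct_mulVec_pos hPH fun x hx => ?_
    set v : Fin 2 → (Fin 2 × Fin 2 → ℂ) := fun k p => if p.1 = k then x p.2 else 0 with hv
    have hdecomp : star x ⬝ᵥ redP G *ᵥ x = ∑ k, star (v k) ⬝ᵥ G *ᵥ (v k) := by
      simp only [dotProduct, mulVec, redP, of_apply, Pi.star_apply, Fintype.sum_prod_type, hv]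
      simp [Finset.mul_sum, Finset.sum_mul]
      ring
    have hterm : ∀ k, 0 ≤ star (v k) ⬝ᵥ G *ᵥ (v k) := fun k => hG.dotProduct_mulVec_nonneg (v k)
    have hnonneg : 0 ≤ star x ⬝ᵥ redP G *ᵥ x := hdecomp ▸ Finset.sum_nonneg fun k _ => hterm k
    rcases hnonneg.lt_or_eq with h | h
    · exact h
    exfalso
    have hzero : ∀ k, star (v k) ⬝ᵥ G *ᵥ (v k) = 0 := by
      intro k
      have := (Finset.sum_eq_zero_iff_of_nonneg (fun k _ => hterm k)).mp
        (by rw [← hdecomp, ← h])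
      exact this k (Finset.mem_univ k)
    have hkv : ∀ k, G *ᵥ (v k) = 0 := fun k =>
      (hG.dotProduct_mulVec_zero_iff (v k)).mp (hzero k)
    obtain ⟨j, hj⟩ := Function.ne_iff.mp hx
    refine ker_too_big G hrank (v 0) (v 1) (hkv 0) (hkv 1) ?_
    rw [LinearIndependent.pair_iff]
    intro s t hst
    constructor
    · have := congrFun hst (0, j); simp [hv] at this; exact this.resolve_right hj
    · have := congrFun hst (1, j); simp [hv] at this; exact this.resolve_right hj
  refine ⟨hSpd, hPpd, fun htr hs hp => ?_⟩
  have htrS : (redS G).trace = 1 := by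
    rw [← htr]
    simp [Matrix.trace, Matrix.diag, redS, Fintype.sum_prod_type]
  have htrP : (redP G).trace = 1 := by
    rw [← htr]
    simp [Matrix.trace, Matrix.diag, redP, Fintype.sum_prod_type]
    ring
  exact ⟨entropy_pos_of_posDef hSpd htrS hs, entropy_pos_of_posDef hPpd htrP hp⟩
end

section
/- Let G be a 4×4 complex Hermitian positive semidefinite matrix indexed by (Fin 2) × (Fin 2) with trace 1, and let λ₁ ≥ λ₂ ≥ λ₃ ≥ λ₄ ≥ 0 be its eigenvalues in decreasing order. Then for every 4×4 unitary matrix U, the largest eigenvalue of the reduced polarization coherence matrix of U G Uᴴ (the 2×2 matrix with entries (G_p) i j = ∑_k (U G Uᴴ) (k,i) (k,j)) is at most λ₁ + λ₂. -/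
open Matrix ComplexOrder

lemma kyfan_sum {l1 l2 l3 l4 : ℝ} (h21 : l2 ≤ l1) (h32 : l3 ≤ l2) (h43 : l4 ≤ l3)
    (lam : Fin 2 × Fin 2 → ℝ)
    (hlam : Finset.univ.val.map lam = ({l1, l2, l3, l4} : Multiset ℝ))
    (c : Fin 2 × Fin 2 → ℝ) (hc0 : ∀ i, 0 ≤ c i) (hc1 : ∀ i, c i ≤ 1)
    (hsum : ∑ i, c i = 2) :
    ∑ i, lam i * c i ≤ l1 + l2 := by
  have key : ∀ i, lam i * c i ≤ max (lam i - l2) 0 + l2 * c i := by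
    intro i
    have h := hc0 i; have h' := hc1 i
    rcases le_or_gt (lam i) l2 with hle | hlt
    · nlinarith [le_max_right (lam i - l2) (0:ℝ)]
    · nlinarith [le_max_left (lam i - l2) (0:ℝ)]
  have hmaxsum : ∑ i, max (lam i - l2) 0 = l1 - l2 := by
    have : ∑ i, max (lam i - l2) 0
        = ((Finset.univ.val.map lam).map (fun x => max (x - l2) 0)).sum := by
      rw [Multiset.map_map]
      rfl
    rw [this, hlam]
    simp only [Multiset.insert_eq_cons, Multiset.map_cons, Multiset.map_singleton,
      Multiset.sum_cons, Multiset.sum_singleton]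
    rw [max_eq_left (by linarith), max_eq_right (by linarith),
      max_eq_right (by linarith), max_eq_right (by linarith)]
    ring
  calc ∑ i, lam i * c i ≤ ∑ i, (max (lam i - l2) 0 + l2 * c i) :=
        Finset.sum_le_sum fun i _ => key i
    _ = (∑ i, max (lam i - l2) 0) + l2 * ∑ i, c i := by
        rw [Finset.sum_add_distrib, Finset.mul_sum]
    _ = (l1 - l2) + l2 * 2 := by rw [hmaxsum, hsum]
    _ ≤ l1 + l2 := by linarith

/-- real part of a diagonal entry of a PSD matrix is nonneg -/
lemma re_diag_nonneg {n : Type*} [Fintype n] [DecidableEq n]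
    {M : Matrix n n ℂ} (hM : M.PosSemidef) (i : n) : 0 ≤ (M i i).re := by
  have h := hM.re_dotProduct_nonneg (Pi.single i 1)
  have : star (Pi.single i 1 : n → ℂ) ⬝ᵥ M *ᵥ (Pi.single i 1) = M i i := by
    simp [dotProduct, mulVec, Pi.single_apply, star, apply_ite]
    rw [Finset.sum_eq_single i] <;> simp +contextual [Complex.ext_iff]
  rwa [this] at h

lemma kyfan_matrix {l1 l2 l3 l4 : ℝ} (h21 : l2 ≤ l1) (h32 : l3 ≤ l2) (h43 : l4 ≤ l3)
    (G : Matrix (Fin 2 × Fin 2) (Fin 2 × Fin 2) ℂ) (hG : G.PosSemidef)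
    (heig : Finset.univ.val.map hG.isHermitian.eigenvalues =
      ({l1, l2, l3, l4} : Multiset ℝ))
    (W : Matrix (Fin 2 × Fin 2) (Fin 2) ℂ) (hW : Wᴴ * W = 1) :
    (Matrix.trace (Wᴴ * G * W)).re ≤ l1 + l2 := by
  classical
  set hH := hG.isHermitian
  set lam := hH.eigenvalues with hlam
  set C : Matrix (Fin 2 × Fin 2) (Fin 2 × Fin 2) ℂ :=
    (hH.eigenvectorUnitary : Matrix (Fin 2 × Fin 2) (Fin 2 × Fin 2) ℂ) with hCdef
  have hC1 : Cᴴ * C = 1 := by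
    rw [← Matrix.star_eq_conjTranspose]
    exact Matrix.mem_unitaryGroup_iff'.mp hH.eigenvectorUnitary.2
  have hC2 : C * Cᴴ = 1 := by
    rw [← Matrix.star_eq_conjTranspose]
    exact Matrix.mem_unitaryGroup_iff.mp hH.eigenvectorUnitary.2
  set M := Cᴴ * W * Wᴴ * C with hM
  have hGdecomp : G = C * Matrix.diagonal (Complex.ofReal ∘ lam) * Cᴴ := by
    rw [hCdef, ← Matrix.star_eq_conjTranspose]
    exact hH.spectral_theorem
  have htrace : Matrix.trace (Wᴴ * G * W) = ∑ j, (lam j : ℂ) * M j j := by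
    rw [hGdecomp]
    have h1 : Wᴴ * (C * Matrix.diagonal (Complex.ofReal ∘ lam) * Cᴴ) * W
        = (Wᴴ * C * Matrix.diagonal (Complex.ofReal ∘ lam)) * (Cᴴ * W) := by
      simp only [Matrix.mul_assoc]
    rw [h1, Matrix.trace_mul_comm]
    have h2 : Cᴴ * W * (Wᴴ * C * Matrix.diagonal (Complex.ofReal ∘ lam))
        = M * Matrix.diagonal (Complex.ofReal ∘ lam) := by
      rw [hM]; simp only [Matrix.mul_assoc]
    rw [h2, Matrix.trace]
    simp only [Matrix.diag_apply, Matrix.mul_diagonal, Function.comp_apply]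
    exact Finset.sum_congr rfl fun j _ => mul_comm _ _
  set c : Fin 2 × Fin 2 → ℝ := fun j => (M j j).re with hc
  have hc0 : ∀ j, 0 ≤ c j := by
    intro j
    have hpsd : (Cᴴ * W * (Cᴴ * W)ᴴ).PosSemidef := Matrix.posSemidef_self_mul_conjTranspose _
    have h3 : Cᴴ * W * (Cᴴ * W)ᴴ = M := by
      rw [hM, Matrix.conjTranspose_mul, Matrix.conjTranspose_conjTranspose]
      simp only [Matrix.mul_assoc]
    rw [h3] at hpsd
    exact re_diag_nonneg hpsd j
  have hkey : W * Wᴴ * (W * Wᴴ) = W * Wᴴ := by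
    rw [Matrix.mul_assoc W Wᴴ, ← Matrix.mul_assoc Wᴴ W, hW, Matrix.one_mul]
  have hc1 : ∀ j, c j ≤ 1 := by
    intro j
    set P : Matrix (Fin 2 × Fin 2) (Fin 2 × Fin 2) ℂ := 1 - W * Wᴴ with hPdef
    have hPH : Pᴴ = P := by
      rw [hPdef]
      simp [Matrix.conjTranspose_sub, Matrix.conjTranspose_mul]
    have hPP : P * Pᴴ = P := by
      rw [hPH, hPdef, Matrix.sub_mul, Matrix.mul_sub, Matrix.mul_sub,
        Matrix.one_mul, Matrix.one_mul, Matrix.mul_one, hkey]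
      abel
    have hPpsd : P.PosSemidef := by
      rw [← hPP]; exact Matrix.posSemidef_self_mul_conjTranspose _
    have hpsd2 : (Cᴴ * P * C).PosSemidef := hPpsd.conjTranspose_mul_mul_same C
    have hEq : Cᴴ * P * C = 1 - M := by
      rw [hPdef, hM, Matrix.mul_sub, Matrix.sub_mul, Matrix.mul_one, hC1]
      simp only [Matrix.mul_assoc]
    have h4 := re_diag_nonneg hpsd2 j
    rw [hEq] at h4
    have h5 : ((1 : Matrix (Fin 2 × Fin 2) (Fin 2 × Fin 2) ℂ) - M) j j = 1 - M j j := by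
      simp [Matrix.one_apply]
    rw [h5] at h4
    simp only [Complex.sub_re, Complex.one_re] at h4
    linarith
  have hsum : ∑ j, c j = 2 := by
    have htrM : Matrix.trace M = 2 := by
      have h1 : Matrix.trace M = Matrix.trace (W * Wᴴ * (C * Cᴴ)) := by
        rw [hM, show Cᴴ * W * Wᴴ * C = Cᴴ * (W * Wᴴ * C) by simp only [Matrix.mul_assoc],
          Matrix.trace_mul_comm]
        simp only [Matrix.mul_assoc]
      rw [h1, hC2, Matrix.mul_one, Matrix.trace_mul_comm, hW, Matrix.trace_one]
      norm_num
    have h6 : (Matrix.trace M).re = 2 := by rw [htrM]; norm_num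
    rw [Matrix.trace] at h6
    rw [← h6]
    simp [Complex.re_sum, Matrix.diag_apply, hc]
  have hfin : ∑ j, lam j * c j ≤ l1 + l2 :=
    kyfan_sum h21 h32 h43 lam heig c hc0 hc1 hsum
  rw [htrace, Complex.re_sum]
  refine le_trans (le_of_eq ?_) hfin
  exact Finset.sum_congr rfl fun j _ => by simp [hc, Complex.mul_re]

/-- For a trace-1 Hermitian positive semidefinite 4×4 coherence matrix with eigenvalues
`l1 ≥ l2 ≥ l3 ≥ l4 ≥ 0` and any global unitary `U`, every (in particular the largest)
eigenvalue of the reduced polarization coherence matrix of `U G Uᴴ` is at most `l1 + l2`. -/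
theorem reduced_eigenvalue_le_sum_two_largest
    (G : Matrix (Fin 2 × Fin 2) (Fin 2 × Fin 2) ℂ) (hG : G.PosSemidef)
    (htr : G.trace = 1)
    (l1 l2 l3 l4 : ℝ) (h21 : l2 ≤ l1) (h32 : l3 ≤ l2) (h43 : l4 ≤ l3) (h4 : 0 ≤ l4)
    (heig : Finset.univ.val.map hG.isHermitian.eigenvalues =
      ({l1, l2, l3, l4} : Multiset ℝ)) :
    ∀ U : Matrix (Fin 2 × Fin 2) (Fin 2 × Fin 2) ℂ, U * Uᴴ = 1 →
      ∀ (hp : (redP (U * G * Uᴴ)).IsHermitian) (i : Fin 2),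
        hp.eigenvalues i ≤ l1 + l2 := by
  intro U hU hp i
  have hU' : Uᴴ * U = 1 := mul_eq_one_comm.mp hU
  set A := U * G * Uᴴ with hA
  set μ := hp.eigenvalues i with hμ
  set v : Fin 2 → ℂ := ⇑(hp.eigenvectorBasis i) with hv
  -- normalization of the eigenvector
  have hvnorm : ∑ b, (starRingEnd ℂ) (v b) * v b = 1 := by
    have horth := orthonormal_iff_ite.mp hp.eigenvectorBasis.orthonormal i i
    simp only [if_pos rfl, PiLp.inner_apply, RCLike.inner_apply] at horth
    rw [if_pos trivial] at horth
    rw [← horth]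
    exact Finset.sum_congr rfl fun b _ => mul_comm _ _
  have hv2 : (starRingEnd ℂ) (v 0) * v 0 + (starRingEnd ℂ) (v 1) * v 1 = 1 := by
    simpa [Fin.sum_univ_two] using hvnorm
  -- eigenvalue as a quadratic form
  have hmu : star v ⬝ᵥ ((redP A) *ᵥ v) = (μ : ℂ) := by
    have hev := hp.mulVec_eigenvectorBasis i
    rw [hv, hev]
    rw [dotProduct_smul]
    have : star (⇑(hp.eigenvectorBasis i)) ⬝ᵥ ⇑(hp.eigenvectorBasis i) = 1 := by
      simpa [dotProduct, Pi.star_apply] using hvnorm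
    rw [this]
    simp [Complex.real_smul, hμ]
  set W0 : Matrix (Fin 2 × Fin 2) (Fin 2) ℂ :=
    Matrix.of (fun p k => if p.1 = k then v p.2 else 0) with hW0
  set W : Matrix (Fin 2 × Fin 2) (Fin 2) ℂ := Uᴴ * W0 with hWdef
  have hW0W0 : W0ᴴ * W0 = 1 := by
    ext k l
    simp only [Matrix.mul_apply, Matrix.conjTranspose_apply, hW0, Matrix.of_apply,
      Fintype.sum_prod_type, Matrix.one_apply]
    fin_cases k <;> fin_cases l <;>
      simp [Fin.sum_univ_two, apply_ite, hv2]
  have hWW : Wᴴ * W = 1 := by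
    rw [hWdef, Matrix.conjTranspose_mul, Matrix.conjTranspose_conjTranspose,
      Matrix.mul_assoc, ← Matrix.mul_assoc U Uᴴ W0, hU, Matrix.one_mul, hW0W0]
  have hWGW : Wᴴ * G * W = W0ᴴ * A * W0 := by
    rw [hWdef, hA, Matrix.conjTranspose_mul, Matrix.conjTranspose_conjTranspose]
    simp only [Matrix.mul_assoc]
  have htrW : Matrix.trace (W0ᴴ * A * W0) = (μ : ℂ) := by
    rw [← hmu]
    simp only [Matrix.trace, Matrix.diag_apply, Matrix.mul_apply,
      Matrix.conjTranspose_apply, dotProduct, Matrix.mulVec, redP,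
      Matrix.of_apply, hW0, Fintype.sum_prod_type, Fin.sum_univ_two, Pi.star_apply]
    simp [Fin.sum_univ_two]
    ring
  have hkf := kyfan_matrix h21 h32 h43 G hG heig W hWW
  rw [hWGW, htrW] at hkf
  simpa using hkf
end

section
/- Let G be a 4×4 complex Hermitian positive semidefinite matrix indexed by (Fin 2) × (Fin 2) with trace 1, and let λ₁ ≥ λ₂ ≥ λ₃ ≥ λ₄ ≥ 0 be its eigenvalues in decreasing order. Define f(x) = −x log₂ x − (1−x) log₂ (1−x) for x ∈ [0,1], with 0 · log₂ 0 = 0. Then for every 4×4 unitary matrix U, the entropy of the reduced polarization coherence matrix of U G Uᴴ (the 2×2 matrix with entries ∑_k (U G Uᴴ) (k,i) (k,j)) is at least f(λ₁ + λ₂). That is, the minimum entropy that can be locked in the polarization degree of freedom under all global unitaries is bounded below by f(λ₁ + λ₂). -/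
open Matrix ComplexOrder

/-- The binary entropy function `f(x) = -x log₂ x - (1-x) log₂ (1-x)`, with `0 · log₂ 0 = 0`
(automatic since `Real.logb 2 0 = 0`). -/
noncomputable def fEnt (x : ℝ) : ℝ :=
  -(x * Real.logb 2 x) - (1 - x) * Real.logb 2 (1 - x)

/-! ### Auxiliary lemmas -/

lemma fEnt_eq_binEntropy (x : ℝ) : fEnt x = Real.binEntropy x / Real.log 2 := by
  simp only [fEnt, Real.binEntropy, Real.logb, Real.log_inv]
  ring

lemma fEnt_anti {x t : ℝ} (hx0 : 0 ≤ x) (ht : t ≤ 1) (hxt : x ≤ t) (hxt' : 1 - x ≤ t) :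
    fEnt t ≤ fEnt x := by
  have hlog : (0:ℝ) < Real.log 2 := Real.log_pos (by norm_num)
  have key : ∀ y : ℝ, 2⁻¹ ≤ y → y ≤ 1 → y ≤ t → Real.binEntropy t ≤ Real.binEntropy y := by
    intro y h1 h2 h3
    rcases eq_or_lt_of_le h3 with h | h
    · rw [h]
    · exact le_of_lt (Real.binEntropy_strictAntiOn ⟨h1, h2⟩ ⟨le_trans h1 h3, ht⟩ h)
  rw [fEnt_eq_binEntropy, fEnt_eq_binEntropy, div_le_div_iff_of_pos_right hlog]
  rcases le_or_gt 2⁻¹ x with h | h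
  · exact key x h (by linarith) hxt
  · rw [← Real.binEntropy_one_sub x]
    exact key (1 - x) (by linarith) (by linarith) hxt'

lemma sum_eig_map {n : Type*} [Fintype n] (f : n → ℝ) {l1 l2 l3 l4 : ℝ}
    (heig : Finset.univ.val.map f = ({l1, l2, l3, l4} : Multiset ℝ)) (g : ℝ → ℝ) :
    ∑ i, g (f i) = g l1 + g l2 + g l3 + g l4 := by
  have h : Finset.univ.val.map (g ∘ f) = ({l1, l2, l3, l4} : Multiset ℝ).map g := by
    rw [← heig, Multiset.map_map]
  have h2 : ∑ i, g (f i) = (Finset.univ.val.map (g ∘ f)).sum := rfl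
  rw [h2, h]
  simp [add_assoc]

lemma dot_transfer {n : Type*} [Fintype n] [DecidableEq n] {V : Matrix n n ℂ}
    (hV : V * Vᴴ = 1) (x z : n → ℂ) :
    star (Vᴴ *ᵥ x) ⬝ᵥ (Vᴴ *ᵥ z) = star x ⬝ᵥ z := by
  rw [star_mulVec, conjTranspose_conjTranspose, dotProduct_mulVec, vecMul_vecMul, hV, vecMul_one]

lemma dot_self_eq_normSq {n : Type*} [Fintype n] (y : n → ℂ) :
    star y ⬝ᵥ y = ((∑ i, Complex.normSq (y i) : ℝ) : ℂ) := by
  push_cast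
  simp [dotProduct, Complex.normSq_eq_conj_mul_self]

lemma quad_spectral {n : Type*} [Fintype n] [DecidableEq n] {A : Matrix n n ℂ}
    (hA : A.IsHermitian) (x : n → ℂ) :
    star x ⬝ᵥ A *ᵥ x = ∑ i, (hA.eigenvalues i : ℂ) *
      ((Complex.normSq (((hA.eigenvectorUnitary : Matrix n n ℂ)ᴴ *ᵥ x) i) : ℝ) : ℂ) := by
  set V := (hA.eigenvectorUnitary : Matrix n n ℂ) with hVdef
  have hspec := hA.spectral_theorem
  rw [Unitary.conjStarAlgAut_apply, Matrix.star_eq_conjTranspose] at hspec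
  conv_lhs => rw [hspec]
  set y := Vᴴ *ᵥ x with hy
  have h1 : star x ⬝ᵥ (V * diagonal (RCLike.ofReal ∘ hA.eigenvalues) * Vᴴ) *ᵥ x
      = star y ⬝ᵥ (diagonal (RCLike.ofReal ∘ hA.eigenvalues)) *ᵥ y := by
    rw [hy, star_mulVec, conjTranspose_conjTranspose, dotProduct_mulVec, dotProduct_mulVec,
      dotProduct_mulVec, vecMul_vecMul, vecMul_vecMul, Matrix.mul_assoc]
  rw [h1]
  simp only [dotProduct, mulVec_diagonal, Function.comp_apply, Pi.star_apply, RCLike.ofReal_alg,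
    smul_eq_mul, Complex.real_smul, mul_one]
  refine Finset.sum_congr rfl fun i _ => ?_
  rw [Complex.normSq_eq_conj_mul_self]
  have : star (y i) = (starRingEnd ℂ) (y i) := rfl
  rw [this]
  ring

lemma bessel2 {n : Type*} [Fintype n] [DecidableEq n] {y0 y1 : n → ℂ}
    (h00 : star y0 ⬝ᵥ y0 = 1) (h11 : star y1 ⬝ᵥ y1 = 1) (h01 : star y0 ⬝ᵥ y1 = 0) (i : n) :
    Complex.normSq (y0 i) + Complex.normSq (y1 i) ≤ 1 := by
  have h10 : star y1 ⬝ᵥ y0 = 0 := by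
    have h : star y1 ⬝ᵥ y0 = star (star y0 ⬝ᵥ y1) := by
      simp [dotProduct, mul_comm]
    rw [h, h01, star_zero]
  set a := y0 i with ha
  set b := y1 i with hb
  set e : n → ℂ := Pi.single i 1 with he
  have hse : star e = e := by
    ext j
    simp [he, Pi.single_apply, apply_ite]
  have hee : e ⬝ᵥ e = 1 := by simp [he, dotProduct, Pi.single_apply]
  have hey0 : e ⬝ᵥ y0 = a := by simp [he, dotProduct, Pi.single_apply]; rfl
  have hey1 : e ⬝ᵥ y1 = b := by simp [he, dotProduct, Pi.single_apply]; rfl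
  have hy0e : star y0 ⬝ᵥ e = starRingEnd ℂ a := by
    simp [he, dotProduct, Pi.single_apply, Finset.sum_ite_eq]; rfl
  have hy1e : star y1 ⬝ᵥ e = starRingEnd ℂ b := by
    simp [he, dotProduct, Pi.single_apply, Finset.sum_ite_eq]; rfl
  set z : n → ℂ := e - (starRingEnd ℂ a) • y0 - (starRingEnd ℂ b) • y1 with hz
  have hstz : star z = e - a • star y0 - b • star y1 := by
    rw [hz, star_sub, star_sub, star_smul, star_smul, hse]
    simp
  have key : star z ⬝ᵥ z = ((1 - Complex.normSq a - Complex.normSq b : ℝ) : ℂ) := by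
    rw [hz, hstz]
    simp only [sub_dotProduct, dotProduct_sub, smul_dotProduct, dotProduct_smul,
      hee, hey0, hey1, h00, h11, h01, h10, hy0e, hy1e, hse, smul_eq_mul]
    push_cast
    rw [Complex.normSq_eq_conj_mul_self, Complex.normSq_eq_conj_mul_self]
    ring
  have hnn : (0:ℝ) ≤ 1 - Complex.normSq a - Complex.normSq b := by
    have h2 := dot_self_eq_normSq z
    rw [key] at h2
    have h3 : ∑ j, Complex.normSq (z j)
        = (1 - Complex.normSq a - Complex.normSq b : ℝ) := by exact_mod_cast h2.symm
    have h4 : (0:ℝ) ≤ ∑ j, Complex.normSq (z j) :=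
      Finset.sum_nonneg fun j _ => Complex.normSq_nonneg _
    linarith
  linarith

lemma kyfan2 {n : Type*} [Fintype n] [DecidableEq n] {A : Matrix n n ℂ} (hA : A.IsHermitian)
    {l1 l2 l3 l4 : ℝ} (h21 : l2 ≤ l1) (h32 : l3 ≤ l2) (h43 : l4 ≤ l3)
    (heig : Finset.univ.val.map hA.eigenvalues = ({l1, l2, l3, l4} : Multiset ℝ))
    {x0 x1 : n → ℂ}
    (h00 : star x0 ⬝ᵥ x0 = 1) (h11 : star x1 ⬝ᵥ x1 = 1) (h01 : star x0 ⬝ᵥ x1 = 0) :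
    (star x0 ⬝ᵥ A *ᵥ x0).re + (star x1 ⬝ᵥ A *ᵥ x1).re ≤ l1 + l2 := by
  set V := (hA.eigenvectorUnitary : Matrix n n ℂ) with hV
  have hVu : V * Vᴴ = 1 := by
    have h := (Matrix.mem_unitaryGroup_iff).mp hA.eigenvectorUnitary.2
    rwa [Matrix.star_eq_conjTranspose] at h
  set y0 := Vᴴ *ᵥ x0 with hy0
  set y1 := Vᴴ *ᵥ x1 with hy1
  have k00 : star y0 ⬝ᵥ y0 = 1 := by rw [hy0, dot_transfer hVu, h00]
  have k11 : star y1 ⬝ᵥ y1 = 1 := by rw [hy1, dot_transfer hVu, h11]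
  have k01 : star y0 ⬝ᵥ y1 = 0 := by rw [hy0, hy1, dot_transfer hVu, h01]
  have n0 : ∑ i, Complex.normSq (y0 i) = 1 := by
    have h := dot_self_eq_normSq y0
    rw [k00] at h
    exact_mod_cast h.symm
  have n1 : ∑ i, Complex.normSq (y1 i) = 1 := by
    have h := dot_self_eq_normSq y1
    rw [k11] at h
    exact_mod_cast h.symm
  have r0 : (star x0 ⬝ᵥ A *ᵥ x0).re = ∑ i, hA.eigenvalues i * Complex.normSq (y0 i) := by
    rw [quad_spectral hA x0, Complex.re_sum]
    exact Finset.sum_congr rfl fun i _ => by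
      rw [← Complex.ofReal_mul, Complex.ofReal_re]
  have r1 : (star x1 ⬝ᵥ A *ᵥ x1).re = ∑ i, hA.eigenvalues i * Complex.normSq (y1 i) := by
    rw [quad_spectral hA x1, Complex.re_sum]
    exact Finset.sum_congr rfl fun i _ => by
      rw [← Complex.ofReal_mul, Complex.ofReal_re]
  set lam := hA.eigenvalues with hlam
  set c : n → ℝ := fun i => Complex.normSq (y0 i) + Complex.normSq (y1 i) with hc
  have hc0 : ∀ i, 0 ≤ c i := fun i =>
    add_nonneg (Complex.normSq_nonneg _) (Complex.normSq_nonneg _)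
  have hc1 : ∀ i, c i ≤ 1 := fun i => bessel2 k00 k11 k01 i
  have hlhs : (star x0 ⬝ᵥ A *ᵥ x0).re + (star x1 ⬝ᵥ A *ᵥ x1).re = ∑ i, lam i * c i := by
    rw [r0, r1, ← Finset.sum_add_distrib]
    exact Finset.sum_congr rfl fun i _ => by rw [hc]; ring
  rw [hlhs]
  have step : ∑ i, lam i * c i ≤ ∑ i, (max (lam i - l2) 0 + l2 * c i) := by
    refine Finset.sum_le_sum fun i _ => ?_
    have h1 : (lam i - l2) * c i ≤ max (lam i - l2) 0 * c i :=
      mul_le_mul_of_nonneg_right (le_max_left _ _) (hc0 i)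
    have h2 : max (lam i - l2) 0 * c i ≤ max (lam i - l2) 0 :=
      mul_le_of_le_one_right (le_max_right _ _) (hc1 i)
    nlinarith [h1, h2]
  have smax : ∑ i, max (lam i - l2) 0 = l1 - l2 := by
    have h := sum_eig_map lam heig (fun t => max (t - l2) 0)
    rw [h]
    rw [max_eq_left (by linarith), max_eq_right (by linarith),
      max_eq_right (by linarith), max_eq_right (by linarith)]
    ring
  have ssum : ∑ i, (max (lam i - l2) 0 + l2 * c i) = (l1 - l2) + l2 * 2 := by
    rw [Finset.sum_add_distrib, smax, ← Finset.mul_sum]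
    have h : ∑ i, c i = 2 := by
      rw [hc, Finset.sum_add_distrib, n0, n1]; norm_num
    rw [h]
  rw [ssum] at step
  linarith

def uvec (w : Fin 2 → ℂ) (k : Fin 2) : Fin 2 × Fin 2 → ℂ :=
  fun p => if p.1 = k then w p.2 else 0

lemma redP_quad (M : Matrix (Fin 2 × Fin 2) (Fin 2 × Fin 2) ℂ) (w : Fin 2 → ℂ) :
    star w ⬝ᵥ redP M *ᵥ w = ∑ k, star (uvec w k) ⬝ᵥ M *ᵥ (uvec w k) := by
  simp only [redP, uvec, dotProduct, mulVec, Matrix.of_apply, Pi.star_apply,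
    Fintype.sum_prod_type, Fin.sum_univ_two, Fin.isValue]
  norm_num
  ring

lemma uvec_dot (w : Fin 2 → ℂ) (k l : Fin 2) :
    star (uvec w k) ⬝ᵥ uvec w l = if k = l then star w ⬝ᵥ w else 0 := by
  fin_cases k <;> fin_cases l <;>
    simp [uvec, dotProduct, Fintype.sum_prod_type, Fin.sum_univ_two]

lemma trace_redP (M : Matrix (Fin 2 × Fin 2) (Fin 2 × Fin 2) ℂ) :
    (redP M).trace = M.trace := by
  simp only [Matrix.trace, Matrix.diag, redP, Matrix.of_apply, Fintype.sum_prod_type]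
  exact Finset.sum_comm

lemma trace_eq_sum_eigenvalues {n : Type*} [Fintype n] [DecidableEq n]
    {A : Matrix n n ℂ} (hA : A.IsHermitian) :
    A.trace = ∑ i, (hA.eigenvalues i : ℂ) := by
  conv_lhs => rw [hA.spectral_theorem]
  rw [Unitary.conjStarAlgAut_apply, Matrix.star_eq_conjTranspose] at *
  rw [Matrix.trace_mul_cycle]
  have hVu : (hA.eigenvectorUnitary : Matrix n n ℂ) *
      (hA.eigenvectorUnitary : Matrix n n ℂ)ᴴ = 1 := by
    have h := (Matrix.mem_unitaryGroup_iff).mp hA.eigenvectorUnitary.2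
    rwa [Matrix.star_eq_conjTranspose] at h
  rw [mul_eq_one_comm.mp hVu, Matrix.one_mul, Matrix.trace_diagonal]
  simp

lemma conj_quad {n : Type*} [Fintype n] [DecidableEq n] (U B : Matrix n n ℂ) (u : n → ℂ) :
    star u ⬝ᵥ (U * B * Uᴴ) *ᵥ u = star (Uᴴ *ᵥ u) ⬝ᵥ B *ᵥ (Uᴴ *ᵥ u) := by
  rw [star_mulVec, conjTranspose_conjTranspose, dotProduct_mulVec, dotProduct_mulVec,
    dotProduct_mulVec, vecMul_vecMul, vecMul_vecMul, Matrix.mul_assoc]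

/-- For a trace-1 Hermitian positive semidefinite 4×4 coherence matrix with eigenvalues
`l1 ≥ l2 ≥ l3 ≥ l4 ≥ 0` and any global unitary `U`, the entropy of the reduced polarization
coherence matrix of `U G Uᴴ` is at least `f(l1 + l2)`: the locked entropy is bounded below. -/
theorem reduced_entropy_ge_locked_bound
    (G : Matrix (Fin 2 × Fin 2) (Fin 2 × Fin 2) ℂ) (hG : G.PosSemidef)
    (htr : G.trace = 1)
    (l1 l2 l3 l4 : ℝ) (h21 : l2 ≤ l1) (h32 : l3 ≤ l2) (h43 : l4 ≤ l3) (h4 : 0 ≤ l4)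
    (heig : Finset.univ.val.map hG.isHermitian.eigenvalues =
      ({l1, l2, l3, l4} : Multiset ℝ)) :
    ∀ U : Matrix (Fin 2 × Fin 2) (Fin 2 × Fin 2) ℂ, U * Uᴴ = 1 →
      ∀ hp : (redP (U * G * Uᴴ)).IsHermitian,
        fEnt (l1 + l2) ≤ entropy hp := by
  intro U hU hp
  set M := U * G * Uᴴ with hM
  -- sum of eigenvalues of G is 1
  have hsum4 : l1 + l2 + l3 + l4 = 1 := by
    have h := trace_eq_sum_eigenvalues hG.isHermitian
    have h2 : ∑ i, hG.isHermitian.eigenvalues i = l1 + l2 + l3 + l4 := by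
      simpa using sum_eig_map _ heig id
    rw [htr] at h
    have h3 : (1:ℂ) = ((l1 + l2 + l3 + l4 : ℝ) : ℂ) := by
      rw [h]
      exact_mod_cast h2
    exact_mod_cast h3.symm
  have hMps : M.PosSemidef := hG.mul_mul_conjTranspose_same U
  have decomp : ∀ w : Fin 2 → ℂ,
      star w ⬝ᵥ redP M *ᵥ w = ∑ k, star (uvec w k) ⬝ᵥ M *ᵥ (uvec w k) := redP_quad M
  have hNps : (redP M).PosSemidef :=
    .of_dotProduct_mulVec_nonneg hp fun w => by
      rw [decomp w]; exact Finset.sum_nonneg fun k _ => hMps.dotProduct_mulVec_nonneg _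
  -- each eigenvalue of the reduced matrix is at most l1 + l2
  have hub : ∀ j : Fin 2, hp.eigenvalues j ≤ l1 + l2 := by
    intro j
    set w : Fin 2 → ℂ := ⇑(hp.eigenvectorBasis j) with hw
    have hwnorm : star w ⬝ᵥ w = 1 := by
      have h := orthonormal_iff_ite.mp hp.eigenvectorBasis.orthonormal j j
      rw [if_pos rfl] at h
      exact h ▸ ((EuclideanSpace.inner_eq_star_dotProduct _ _).trans (dotProduct_comm _ _)).symm
    have heq : hp.eigenvalues j = (star w ⬝ᵥ redP M *ᵥ w).re := by
      simpa using hp.eigenvalues_eq j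
    have hx : ∀ k l : Fin 2, star (Uᴴ *ᵥ uvec w k) ⬝ᵥ (Uᴴ *ᵥ uvec w l)
        = if k = l then 1 else 0 := by
      intro k l
      rw [dot_transfer hU, uvec_dot w k l]
      by_cases h : k = l <;> simp [h, hwnorm]
    have h00 := hx 0 0; have h11 := hx 1 1; have h01 := hx 0 1
    rw [if_pos rfl] at h00 h11
    rw [if_neg (by decide)] at h01
    have hkf := kyfan2 hG.isHermitian h21 h32 h43 heig h00 h11 h01
    have hsplit : (star w ⬝ᵥ redP M *ᵥ w).re
        = (star (Uᴴ *ᵥ uvec w 0) ⬝ᵥ G *ᵥ (Uᴴ *ᵥ uvec w 0)).re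
          + (star (Uᴴ *ᵥ uvec w 1) ⬝ᵥ G *ᵥ (Uᴴ *ᵥ uvec w 1)).re := by
      rw [decomp w, Fin.sum_univ_two, Complex.add_re, hM, conj_quad, conj_quad]
    rw [heq, hsplit]
    exact hkf
  -- the two eigenvalues of the reduced matrix sum to 1
  have htrN : (redP M).trace = 1 := by
    rw [trace_redP, hM, Matrix.trace_mul_cycle, mul_eq_one_comm.mp hU, Matrix.one_mul, htr]
  have hsum2 : hp.eigenvalues 0 + hp.eigenvalues 1 = 1 := by
    have h := trace_eq_sum_eigenvalues hp
    rw [htrN, Fin.sum_univ_two] at h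
    exact_mod_cast h.symm
  have ha0 : 0 ≤ hp.eigenvalues 0 := hNps.eigenvalues_nonneg 0
  have ha1 : 0 ≤ hp.eigenvalues 1 := hNps.eigenvalues_nonneg 1
  have hent : entropy hp = fEnt (hp.eigenvalues 0) := by
    rw [entropy, fEnt, Fin.sum_univ_two,
      show hp.eigenvalues 1 = 1 - hp.eigenvalues 0 by linarith]
    ring
  rw [hent]
  exact fEnt_anti ha0 (by linarith [hub 0, hub 1, hsum4]) (hub 0)
    (by linarith [hub 1])
end

section
/- Let G be a 4×4 complex Hermitian positive semidefinite matrix indexed by (Fin 2) × (Fin 2) with trace 1, and let λ₁ ≥ λ₂ ≥ λ₃ ≥ λ₄ ≥ 0 be its eigenvalues in decreasing order. Define f(x) = −x log₂ x − (1−x) log₂ (1−x) with 0 · log₂ 0 = 0. Then there exists a 4×4 unitary matrix U such that the reduced polarization coherence matrix of U G Uᴴ (entries ∑_k (U G Uᴴ) (k,i) (k,j)) has entropy exactly f(λ₁ + λ₂), and the reduced spatial coherence matrix of U G Uᴴ (entries ∑_i (U G Uᴴ) (k,i) (l,i)) has entropy exactly f(λ₁ + λ₃). That is, the minimum locked entropy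 f(λ₁ + λ₂) in one degree of freedom is achievable, with entropy f(λ₁ + λ₃) concentrated in the other. -/
open Matrix ComplexOrder

section helpers

open Finset in
lemma exists_comp_perm_fin {n : ℕ} (f g : Fin n → ℝ)
    (h : univ.val.map f = univ.val.map g) : ∃ σ : Equiv.Perm (Fin n), f = g ∘ σ := by
  have hl : List.Perm (List.ofFn f) (List.ofFn g) := by
    rwa [Fin.univ_val_map, Fin.univ_val_map, Multiset.coe_eq_coe] at h
  have h1 : List.Perm (List.ofFn (f ∘ Tuple.sort f)) (List.ofFn (g ∘ Tuple.sort g)) :=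
    ((Equiv.Perm.ofFn_comp_perm _ f).trans hl).trans
      (Equiv.Perm.ofFn_comp_perm (Tuple.sort g) g).symm
  have heq : f ∘ Tuple.sort f = g ∘ Tuple.sort g :=
    List.ofFn_injective <| List.Perm.eq_of_sortedLE
      ((Tuple.monotone_sort f).sortedLE_ofFn) ((Tuple.monotone_sort g).sortedLE_ofFn) h1
  refine ⟨(Tuple.sort f).symm.trans (Tuple.sort g), ?_⟩
  funext i
  simpa using congrFun heq ((Tuple.sort f).symm i)

open Finset in
lemma exists_comp_perm {α : Type*} [Fintype α] [DecidableEq α] (f g : α → ℝ)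
    (h : univ.val.map f = univ.val.map g) : ∃ σ : Equiv.Perm α, f = g ∘ σ := by
  let e := Fintype.equivFin α
  have key : ∀ u : α → ℝ, (univ.val.map (u ∘ e.symm) : Multiset ℝ) = univ.val.map u := by
    intro u
    calc (univ.val.map (u ∘ e.symm) : Multiset ℝ)
        = (univ.val.map e.symm).map u := by rw [Multiset.map_map]
      _ = ((univ : Finset (Fin _)).map e.symm.toEmbedding).val.map u := by
            rw [Finset.map_val]; rfl
      _ = univ.val.map u := by rw [Finset.map_univ_equiv]
  obtain ⟨σ', hσ'⟩ := exists_comp_perm_fin (f ∘ e.symm) (g ∘ e.symm) (by rw [key, key, h])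
  refine ⟨e.trans (σ'.trans e.symm), ?_⟩
  funext a
  simpa using congrFun hσ' (e a)

lemma trace_eigen {n : Type*} [Fintype n] [DecidableEq n] {M : Matrix n n ℂ}
    (hM : M.IsHermitian) : M.trace = ∑ i, (hM.eigenvalues i : ℂ) ∧
      (M * M).trace = ∑ i, ((hM.eigenvalues i : ℂ))^2 := by
  have hs := hM.spectral_theorem
  set V := (hM.eigenvectorUnitary : Matrix n n ℂ) with hVdef
  set D := Matrix.diagonal (RCLike.ofReal ∘ hM.eigenvalues : n → ℂ) with hDdef
  have hV : star V * V = 1 := Unitary.coe_star_mul_self _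
  constructor
  · calc M.trace = (V * D * star V).trace := congrArg Matrix.trace hs
      _ = (star V * V * D).trace := by rw [Matrix.trace_mul_cycle]
      _ = D.trace := by rw [hV, one_mul]
      _ = ∑ i, (hM.eigenvalues i : ℂ) := by rw [hDdef, trace_diagonal]; rfl
  · have e1 : (V * D * star V) * (V * D * star V) = V * (D * D) * star V := by
      rw [mul_assoc (V * D) (star V) (V * D * star V), ← mul_assoc (star V) (V * D) (star V),
        ← mul_assoc (star V) V D, hV, one_mul, ← mul_assoc, mul_assoc V D D]
    calc (M * M).trace = ((V * D * star V) * (V * D * star V)).trace :=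
        congrArg (fun X => (X * X).trace) hs
      _ = (V * (D * D) * star V).trace := by rw [e1]
      _ = (star V * V * (D * D)).trace := by rw [Matrix.trace_mul_cycle]
      _ = (D * D).trace := by rw [hV, one_mul]
      _ = ∑ i, ((hM.eigenvalues i : ℂ))^2 := by
          rw [hDdef, diagonal_mul_diagonal, trace_diagonal]
          simp [sq]

lemma entropy_diag (a b : ℝ) (hab : a + b = 1)
    (h : (Matrix.diagonal (![(a:ℂ), (b:ℂ)])).IsHermitian) :
    entropy h = fEnt a := by
  obtain ⟨ht, ht2⟩ := trace_eigen h
  have htr : (Matrix.diagonal (![(a:ℂ), (b:ℂ)])).trace = ((a + b : ℝ) : ℂ) := by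
    rw [trace_diagonal]; simp [Fin.sum_univ_two]
  have htr2 : (Matrix.diagonal (![(a:ℂ), (b:ℂ)]) * Matrix.diagonal (![(a:ℂ), (b:ℂ)])).trace
      = ((a^2 + b^2 : ℝ) : ℂ) := by
    rw [diagonal_mul_diagonal, trace_diagonal]; simp [Fin.sum_univ_two]; ring
  have h1 : h.eigenvalues 0 + h.eigenvalues 1 = a + b := by
    have : ((h.eigenvalues 0 + h.eigenvalues 1 : ℝ) : ℂ) = ((a + b : ℝ) : ℂ) := by
      rw [← htr, ht, Fin.sum_univ_two]; push_cast; ring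
    exact_mod_cast this
  have h2 : (h.eigenvalues 0)^2 + (h.eigenvalues 1)^2 = a^2 + b^2 := by
    have : (((h.eigenvalues 0)^2 + (h.eigenvalues 1)^2 : ℝ) : ℂ) = ((a^2 + b^2 : ℝ) : ℂ) := by
      rw [← htr2, ht2, Fin.sum_univ_two]; push_cast; ring
    exact_mod_cast this
  have hb : b = 1 - a := by linarith
  have hm1 : h.eigenvalues 1 = a + b - h.eigenvalues 0 := by linarith
  rw [hm1] at h2
  have hcases : h.eigenvalues 0 = a ∨ h.eigenvalues 0 = b := by
    have hz : (h.eigenvalues 0 - a) * (h.eigenvalues 0 - b) = 0 := by linear_combination h2 / 2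
    rcases mul_eq_zero.mp hz with h' | h'
    · left; linarith
    · right; linarith
  unfold entropy fEnt
  rw [Fin.sum_univ_two]
  rcases hcases with h' | h'
  · have h'' : h.eigenvalues 1 = b := by linarith
    rw [h', h'', hb]; ring
  · have h'' : h.eigenvalues 1 = a := by linarith
    rw [h', h'', hb]; ring

end helpers

/-- For a trace-1 Hermitian positive semidefinite 4×4 coherence matrix with eigenvalues
`l1 ≥ l2 ≥ l3 ≥ l4 ≥ 0`, there is a global unitary `U` for which the reduced polarization
coherence matrix of `U G Uᴴ` has entropy exactly `f(l1 + l2)` (the minimum locked entropy)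
while the reduced spatial coherence matrix has entropy exactly `f(l1 + l3)`. -/
theorem locked_entropy_achievable
    (G : Matrix (Fin 2 × Fin 2) (Fin 2 × Fin 2) ℂ) (hG : G.PosSemidef)
    (htr : G.trace = 1)
    (l1 l2 l3 l4 : ℝ) (h21 : l2 ≤ l1) (h32 : l3 ≤ l2) (h43 : l4 ≤ l3) (h4 : 0 ≤ l4)
    (heig : Finset.univ.val.map hG.isHermitian.eigenvalues =
      ({l1, l2, l3, l4} : Multiset ℝ)) :
    ∃ U : Matrix (Fin 2 × Fin 2) (Fin 2 × Fin 2) ℂ, U * Uᴴ = 1 ∧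
      (∀ hp : (redP (U * G * Uᴴ)).IsHermitian, entropy hp = fEnt (l1 + l2)) ∧
      (∀ hs : (redS (U * G * Uᴴ)).IsHermitian, entropy hs = fEnt (l1 + l3)) := by
  classical
  set d : Fin 2 × Fin 2 → ℝ := fun p => ![![l1, l3], ![l2, l4]] p.1 p.2 with hd
  have hdmul : (Finset.univ.val.map d : Multiset ℝ) = ({l1, l2, l3, l4} : Multiset ℝ) := by
    have hu : (Finset.univ.val : Multiset (Fin 2 × Fin 2)) =
        {((0:Fin 2),(0:Fin 2)), (0,1), (1,0), (1,1)} := by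
      set_option maxHeartbeats 1000000 in decide
    rw [hu]
    simp only [Multiset.map_cons, Multiset.map_singleton, hd]
    norm_num
    exact Multiset.cons_swap l3 l2 ({l4} : Multiset ℝ) ▸ rfl
  obtain ⟨σ, hσ⟩ := exists_comp_perm hG.isHermitian.eigenvalues d (by rw [heig, hdmul])
  set V := (hG.isHermitian.eigenvectorUnitary : Matrix (Fin 2 × Fin 2) (Fin 2 × Fin 2) ℂ) with hV
  set P : Matrix (Fin 2 × Fin 2) (Fin 2 × Fin 2) ℂ := (σ⁻¹.toPEquiv).toMatrix with hP
  have hVu : star V * V = 1 := Unitary.coe_star_mul_self _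
  have hPH : Pᴴ = (σ.toPEquiv).toMatrix := by
    have hPt : Pᴴ = Pᵀ := by
      ext i j
      simp [conjTranspose_apply, transpose_apply, hP, PEquiv.toMatrix_apply,
        apply_ite (starRingEnd ℂ)]
    rw [hPt, hP, ← PEquiv.toMatrix_symm, ← Equiv.toPEquiv_symm, Equiv.Perm.inv_def,
      Equiv.symm_symm]
  have hPP : P * Pᴴ = 1 := by
    rw [hPH, hP, ← PEquiv.toMatrix_trans, ← Equiv.toPEquiv_trans, Equiv.Perm.inv_def,
      Equiv.symm_trans_self, Equiv.toPEquiv_refl, PEquiv.toMatrix_refl]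
  set U := P * star V with hU
  have hUH : Uᴴ = V * Pᴴ := by
    rw [hU, conjTranspose_mul, ← star_eq_conjTranspose, star_star]
  have hUU : U * Uᴴ = 1 := by
    rw [hUH, hU, mul_assoc, ← mul_assoc (star V) V Pᴴ, hVu, one_mul, hPP]
  have key : ∀ c : (Fin 2 × Fin 2) → ℂ, P * Matrix.diagonal c * Pᴴ = Matrix.diagonal (fun p => c (σ⁻¹ p)) := by
    intro c
    rw [hPH, hP, PEquiv.toMatrix_toPEquiv_mul, PEquiv.mul_toMatrix_toPEquiv, submatrix_submatrix]
    have hinj : Function.Injective (σ⁻¹ : Equiv.Perm (Fin 2 × Fin 2)) := Equiv.injective _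
    have : (⇑σ⁻¹ ∘ id) = ⇑σ⁻¹ := rfl
    rw [this]
    have h2 : (id ∘ ⇑σ.symm) = ⇑σ⁻¹ := rfl
    rw [h2]
    exact Matrix.submatrix_diagonal c _ hinj
  have hUGU : U * G * Uᴴ = Matrix.diagonal (fun p => ((d p : ℝ) : ℂ)) := by
    have hA : star V * G * V = Matrix.diagonal (RCLike.ofReal ∘ hG.isHermitian.eigenvalues) :=
      by have := hG.isHermitian.conjStarAlgAut_star_eigenvectorUnitary
         rwa [Unitary.conjStarAlgAut_star_apply] at this
    have hassoc : U * G * Uᴴ = P * (star V * G * V) * Pᴴ := by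
      rw [hUH, hU]
      rw [mul_assoc P (star V) G, mul_assoc P (star V * G) (V * Pᴴ),
        ← mul_assoc (star V * G) V Pᴴ, ← mul_assoc P (star V * G * V) Pᴴ]
    rw [hassoc, hA, key]
    refine congrArg Matrix.diagonal (funext fun p => ?_)
    have h' : hG.isHermitian.eigenvalues (σ⁻¹ p) = d p := by
      simpa using congrFun hσ (σ⁻¹ p)
    exact congrArg (fun x : ℝ => (x : ℂ)) h'
  have hsum : l1 + l2 + l3 + l4 = 1 := by
    have hUHU : Uᴴ * U = 1 := mul_eq_one_comm.mp hUU
    have h1 : (U * G * Uᴴ).trace = G.trace := by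
      rw [Matrix.trace_mul_cycle, hUHU, one_mul]
    have h2 : (Matrix.diagonal (fun p => ((d p : ℝ) : ℂ))).trace = ((l1+l3+l2+l4 : ℝ) : ℂ) := by
      rw [trace_diagonal, Fintype.sum_prod_type]
      simp [Fin.sum_univ_two, hd]
      push_cast; ring
    have := h2.symm.trans ((hUGU ▸ h1).trans htr)
    have hre : (l1+l3+l2+l4 : ℝ) = 1 := by exact_mod_cast this
    linarith
  have hredP : redP (Matrix.diagonal (fun p => ((d p : ℝ) : ℂ)))
      = Matrix.diagonal ![((l1+l2 : ℝ):ℂ), ((l3+l4 : ℝ):ℂ)] := by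
    ext i j
    fin_cases i <;> fin_cases j <;>
      simp [redP, Matrix.diagonal_apply, Fin.sum_univ_two, hd, Prod.ext_iff] <;>
      push_cast <;> ring
  have hredS : redS (Matrix.diagonal (fun p => ((d p : ℝ) : ℂ)))
      = Matrix.diagonal ![((l1+l3 : ℝ):ℂ), ((l2+l4 : ℝ):ℂ)] := by
    ext i j
    fin_cases i <;> fin_cases j <;>
      simp [redS, Matrix.diagonal_apply, Fin.sum_univ_two, hd, Prod.ext_iff] <;>
      push_cast <;> ring
  refine ⟨U, hUU, ?_, ?_⟩
  · rw [hUGU, hredP]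
    intro hp
    exact entropy_diag (l1+l2) (l3+l4) (by linarith) hp
  · rw [hUGU, hredS]
    intro hs
    exact entropy_diag (l1+l3) (l2+l4) (by linarith) hs
end

section
/- Let G be a 4×4 complex Hermitian positive semidefinite matrix indexed by (Fin 2) × (Fin 2) with trace 1 and rank at most 2. Then there exists a 4×4 unitary matrix U such that the reduced spatial coherence matrix of U G Uᴴ (entries ∑_i (U G Uᴴ) (k,i) (l,i)) has entropy 0, while the reduced polarization coherence matrix of U G Uᴴ (entries ∑_k (U G Uᴴ) (k,i) (k,j)) has entropy equal to the total entropy S(G) = −∑_j λ_j log₂ λ_j of G. That is, the entire entropy of a rank-2 field — no matter how high — can always be concentrated into a single degree of freedom, leaving the other free of statistical fluctuations. -/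
open Matrix ComplexOrder

section Aux

open Polynomial

variable {n : Type*} [Fintype n] [DecidableEq n]

lemma my_charpoly_diagonal (c : n → ℂ) :
    (Matrix.diagonal c).charpoly = ∏ i, (X - C (c i)) := by
  unfold Matrix.charpoly
  have : charmatrix (Matrix.diagonal c) = Matrix.diagonal (fun i => (X : ℂ[X]) - C (c i)) := by
    ext i j
    by_cases h : i = j
    · subst h; simp [charmatrix_apply_eq]
    · simp [charmatrix_apply_ne _ _ _ h, Matrix.diagonal_apply_ne _ h]
  rw [this, Matrix.det_diagonal]

lemma my_charpoly_conj (U M : Matrix n n ℂ) (h2 : U * star U = 1) :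
    (U * M * star U).charpoly = M.charpoly := by
  unfold Matrix.charpoly
  have hone : U.map C * (star U).map C = 1 := by
    rw [← Matrix.map_mul, h2, Matrix.map_one _ (map_zero C) (map_one C)]
  have key : charmatrix (U * M * star U)
      = U.map C * charmatrix M * (star U).map C := by
    rw [charmatrix, charmatrix]
    rw [Matrix.mul_sub, Matrix.sub_mul]
    congr 1
    · have hc : (Matrix.diagonal fun _ : n => (X : ℂ[X])) * (star U).map C
          = (star U).map C * Matrix.diagonal fun _ : n => (X : ℂ[X]) := by
        ext i j
        rw [Matrix.diagonal_mul, Matrix.mul_diagonal, mul_comm]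
      show (Matrix.diagonal fun _ : n => (X : ℂ[X]))
          = U.map C * (Matrix.diagonal fun _ : n => (X : ℂ[X])) * (star U).map C
      rw [Matrix.mul_assoc, hc, ← Matrix.mul_assoc, hone, Matrix.one_mul]
    · simp [Matrix.map_mul, Matrix.mul_assoc]
  rw [key, Matrix.det_mul, Matrix.det_mul]
  calc Matrix.det (U.map C) * (charmatrix M).det * ((star U).map C).det
      = (U.map C * (star U).map C).det * (charmatrix M).det := by
        rw [Matrix.det_mul]; ring
    _ = (charmatrix M).det := by rw [hone, Matrix.det_one, one_mul]

/-- For a Hermitian matrix which happens to be a real diagonal matrix, any function applied to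
the eigenvalues sums the same as applied to the diagonal entries. -/
lemma eig_sum_eq {M : Matrix n n ℂ} (hM : M.IsHermitian) (d : n → ℝ)
    (hMd : M = Matrix.diagonal (fun i => (d i : ℂ))) (f : ℝ → ℝ) :
    ∑ i, f (hM.eigenvalues i) = ∑ i, f (d i) := by
  have hc1 : M.charpoly = ∏ i, (X - C ((hM.eigenvalues i : ℝ) : ℂ)) := by
    conv_lhs => rw [hM.spectral_theorem]
    rw [Unitary.conjStarAlgAut_apply, my_charpoly_conj _ _
        ((Matrix.mem_unitaryGroup_iff).mp (Matrix.IsHermitian.eigenvectorUnitary hM).2)]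
    exact my_charpoly_diagonal _
  have hc2 : M.charpoly = ∏ i, (X - C ((d i : ℝ) : ℂ)) := by
    rw [hMd]; exact my_charpoly_diagonal _
  have hroots : Multiset.map (fun i => ((hM.eigenvalues i : ℝ) : ℂ)) Finset.univ.val
      = Multiset.map (fun i => ((d i : ℝ) : ℂ)) Finset.univ.val := by
    have h1 := congrArg Polynomial.roots (hc1.symm.trans hc2)
    rwa [show (∏ i, (X - C ((hM.eigenvalues i : ℝ) : ℂ)))
          = ((Finset.univ.val.map fun i => ((hM.eigenvalues i : ℝ) : ℂ)).map
              fun a => X - C a).prod by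
        rw [Multiset.map_map]; rfl,
      show (∏ i, (X - C ((d i : ℝ) : ℂ)))
          = ((Finset.univ.val.map fun i => ((d i : ℝ) : ℂ)).map fun a => X - C a).prod by
        rw [Multiset.map_map]; rfl,
      Polynomial.roots_multiset_prod_X_sub_C, Polynomial.roots_multiset_prod_X_sub_C] at h1
  have h2 := congrArg (fun m => (Multiset.map (fun z : ℂ => f z.re) m).sum) hroots
  simp only [Multiset.map_map, Function.comp_def, Complex.ofReal_re] at h2
  show (Finset.univ.val.map fun i => f (hM.eigenvalues i)).sum
      = (Finset.univ.val.map fun i => f (d i)).sum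
  exact h2

/-- Any two finsets of the same cardinality are related by a permutation of the ambient type. -/
lemma exists_perm_mem_iff {α : Type*} [Fintype α] [DecidableEq α] (s t : Finset α)
    (h : s.card = t.card) : ∃ π : Equiv.Perm α, ∀ x, π x ∈ t ↔ x ∈ s := by
  classical
  have hc : sᶜ.card = tᶜ.card := by rw [Finset.card_compl, Finset.card_compl, h]
  let e1 : {x // x ∈ s} ≃ {x // x ∈ t} := Finset.equivOfCardEq h
  let e2 : {x // ¬ x ∈ s} ≃ {x // ¬ x ∈ t} :=
    ((Equiv.subtypeEquivRight (fun x => (Finset.mem_compl (s := s) (a := x)).symm)).trans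
      (Finset.equivOfCardEq hc)).trans
        (Equiv.subtypeEquivRight (fun x => Finset.mem_compl (s := t) (a := x)))
  refine ⟨(Equiv.sumCompl (· ∈ s)).symm.trans ((Equiv.sumCongr e1 e2).trans
    (Equiv.sumCompl (· ∈ t))), fun x => ?_⟩
  by_cases hx : x ∈ s
  · simp only [Equiv.trans_apply, Equiv.sumCompl_symm_apply_of_pos hx,
      Equiv.sumCongr_apply, Sum.map_inl, Equiv.sumCompl_apply_inl]
    simpa [hx] using Finset.coe_mem (e1 ⟨x, hx⟩)
  · simp only [Equiv.trans_apply, Equiv.sumCompl_symm_apply_of_neg hx,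
      Equiv.sumCongr_apply, Sum.map_inr, Equiv.sumCompl_apply_inr]
    simpa [hx] using (e2 ⟨x, hx⟩).2

end Aux

/-- For a trace-1 Hermitian positive semidefinite 4×4 coherence matrix of rank at most 2,
there is a global unitary `U` such that the reduced spatial coherence matrix of `U G Uᴴ` has
entropy 0 while the reduced polarization coherence matrix carries the entire entropy `S(G)`:
the entropy of a rank-2 field can always be concentrated into a single degree of freedom. -/
theorem rank_two_entropy_concentration
    (G : Matrix (Fin 2 × Fin 2) (Fin 2 × Fin 2) ℂ) (hG : G.PosSemidef)
    (htr : G.trace = 1) (hrank : G.rank ≤ 2) :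
    ∃ U : Matrix (Fin 2 × Fin 2) (Fin 2 × Fin 2) ℂ, U * Uᴴ = 1 ∧
      (∀ hs : (redS (U * G * Uᴴ)).IsHermitian, entropy hs = 0) ∧
      (∀ hp : (redP (U * G * Uᴴ)).IsHermitian, entropy hp = entropy hG.isHermitian) := by
  classical
  set hH : G.IsHermitian := hG.isHermitian with hHdef
  set eig : Fin 2 × Fin 2 → ℝ := hH.eigenvalues with heig
  set Vm : Matrix (Fin 2 × Fin 2) (Fin 2 × Fin 2) ℂ := ↑(hH.eigenvectorUnitary) with hVm
  have hVm1 : Vm * star Vm = 1 := (Matrix.mem_unitaryGroup_iff).mp hH.eigenvectorUnitary.2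
  have hVm2 : star Vm * Vm = 1 := (Matrix.mem_unitaryGroup_iff').mp hH.eigenvectorUnitary.2
  have hspec : G = Vm * Matrix.diagonal (RCLike.ofReal ∘ eig) * star Vm := hH.spectral_theorem
  -- the support of the eigenvalues has at most 2 elements
  set s : Finset (Fin 2 × Fin 2) := Finset.univ.filter (fun i => eig i ≠ 0) with hs
  have hscard : s.card ≤ 2 := by
    have h := hH.rank_eq_card_non_zero_eigs
    rw [Fintype.card_subtype] at h
    rw [hs]
    simp only [heig]
    rw [← h]
    exact hrank
  set t : Finset (Fin 2 × Fin 2) :=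
    {((0 : Fin 2), (0 : Fin 2)), ((0 : Fin 2), (1 : Fin 2))} with ht
  obtain ⟨s', hss', -, hs'card⟩ :=
    Finset.exists_subsuperset_card_eq (s.subset_univ) hscard (by decide)
  obtain ⟨π, hπ⟩ := exists_perm_mem_iff s' t (by rw [hs'card]; decide)
  -- eigenvalues vanish outside `t` after relabeling
  have hzero : ∀ j, j ∉ t → eig (π.symm j) = 0 := by
    intro j hj
    by_contra h
    have h1 : π.symm j ∈ s := by simp [hs, h]
    have h2 : π (π.symm j) ∈ t := (hπ _).mpr (hss' h1)
    rw [Equiv.apply_symm_apply] at h2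
    exact hj h2
  set U : Matrix (Fin 2 × Fin 2) (Fin 2 × Fin 2) ℂ := (star Vm).submatrix π.symm id with hU
  have hUH : Uᴴ = Vm.submatrix id π.symm := by
    rw [hU, conjTranspose_submatrix]
    congr 1
    rw [Matrix.star_eq_conjTranspose, conjTranspose_conjTranspose]
  have hl : ∀ A Y : Matrix (Fin 2 × Fin 2) (Fin 2 × Fin 2) ℂ,
      A.submatrix π.symm id * Y = (A * Y).submatrix π.symm id := by
    intro A Y
    simpa using (Matrix.submatrix_mul A Y π.symm id id Function.bijective_id).symm
  have hD : star Vm * G * Vm = Matrix.diagonal (RCLike.ofReal ∘ eig) := by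
    rw [hspec]
    simp only [← Matrix.mul_assoc]
    rw [hVm2, Matrix.one_mul, Matrix.mul_assoc, hVm2, Matrix.mul_one]
  have key : U * G * Uᴴ = Matrix.diagonal (fun j => ((eig (π.symm j) : ℝ) : ℂ)) := by
    calc U * G * Uᴴ = (star Vm * G).submatrix π.symm id * Vm.submatrix id π.symm := by
          rw [hUH, hU, hl]
      _ = (star Vm * G * Vm).submatrix π.symm π.symm :=
          (Matrix.submatrix_mul (star Vm * G) Vm π.symm id π.symm Function.bijective_id).symm
      _ = Matrix.diagonal (fun j => ((eig (π.symm j) : ℝ) : ℂ)) := by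
          rw [hD, Matrix.submatrix_diagonal_equiv]
          rfl
  have hU1 : U * Uᴴ = 1 := by
    rw [hUH, hU, hl]
    have := (Matrix.submatrix_mul (star Vm * Vm) Vm π.symm id π.symm
      Function.bijective_id).symm
    calc ((star Vm) * Vm).submatrix π.symm π.symm
        = (1 : Matrix (Fin 2 × Fin 2) (Fin 2 × Fin 2) ℂ).submatrix π.symm π.symm := by
          rw [hVm2]
      _ = 1 := Matrix.submatrix_one_equiv π.symm
  -- total eigenvalue sum is 1
  have htrsum : ∑ j, ((eig j : ℝ) : ℂ) = 1 := by
    have h1 : G.trace = (Matrix.diagonal (RCLike.ofReal ∘ eig)).trace := by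
      conv_lhs => rw [hspec]
      rw [Matrix.trace_mul_cycle, hVm2, Matrix.one_mul]
    rw [htr, Matrix.trace_diagonal] at h1
    exact h1.symm
  have htrsumR : ∑ j, eig j = 1 := by
    rw [← Complex.ofReal_sum] at htrsum
    exact_mod_cast htrsum
  have z10 : eig (π.symm (1, 0)) = 0 := hzero _ (by rw [ht]; decide)
  have z11 : eig (π.symm (1, 1)) = 0 := hzero _ (by rw [ht]; decide)
  have hsum2 : eig (π.symm (0, 0)) + eig (π.symm (0, 1)) = 1 := by
    have h := Equiv.sum_comp π.symm eig
    rw [htrsumR, Fintype.sum_prod_type, Fin.sum_univ_two, Fin.sum_univ_two,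
      Fin.sum_univ_two, z10, z11] at h
    linarith
  have z11' : eig (π.symm 1) = 0 := z11
  have hsum2' : eig (π.symm 0) + eig (π.symm (0, 1)) = 1 := hsum2
  have hredS : redS (U * G * Uᴴ) = Matrix.diagonal (fun k => ((![1, 0] k : ℝ) : ℂ)) := by
    rw [key]
    ext k l
    fin_cases k <;> fin_cases l <;>
      simp [redS, Matrix.diagonal_apply, Fin.sum_univ_two, Prod.ext_iff, z10, z11, z11'] <;>
      norm_cast
  have hredP : redP (U * G * Uᴴ)
      = Matrix.diagonal (fun i => ((eig (π.symm (0, i)) : ℝ) : ℂ)) := by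
    rw [key]
    ext i j
    fin_cases i <;> fin_cases j <;>
      simp [redP, Matrix.diagonal_apply, Fin.sum_univ_two, Prod.ext_iff, z10, z11, z11']
  refine ⟨U, hU1, ?_, ?_⟩
  · intro hsh
    have h := eig_sum_eq hsh ![1, 0] hredS (fun x => x * Real.logb 2 x)
    unfold entropy
    rw [h]
    simp [Fin.sum_univ_two]
  · intro hp
    have h := eig_sum_eq hp (fun i => eig (π.symm (0, i))) hredP (fun x => x * Real.logb 2 x)
    unfold entropy
    rw [h]
    have h2 := Equiv.sum_comp π.symm (fun x => eig x * Real.logb 2 (eig x))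
    rw [← h2, Fintype.sum_prod_type]
    simp [Fin.sum_univ_two, z10, z11, z11']
end
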